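/- arXiv:2208.08692 — 4 statements merged into one kernel-verified Lean document; each statement's English description precedes it below -/
import Mathlib

section
/- If a chord diagram τ contains none of the four forbidden diagrams (ababcdcd), (abcdabcd), (abacdcbd), (abcadbdc), then the interlacement graph of τ is a disjoint union of a (possibly empty) set of isolated vertices and a complete bipartite or complete tripartite graph. -/
/-- Strict cyclic betweenness on the cyclic group with `m` elements (`ZMod m`, realized as
`Fin m` so that the group is empty when `m = 0`): `b` lies on the open cyclic arc
from `a` to `c`. -/
def cyclicSbtw {m : ℕ} (a b c : Fin m) : Prop :=
  0 < (b.val + (m - a.val)) % m ∧ (b.val + (m - a.val)) % m < (c.val + (m - a.val)) % m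

/-- A chord diagram of order `n`: a fixed-point-free involution `τ` of the cyclic group
with `2n` elements (`ZMod (2n)`, realized as `Fin (2n)`); its chords are the pairs
`{i, τ i}`. -/
structure ChordDiagram (n : ℕ) where
  τ : Equiv.Perm (Fin (2 * n))
  invol : ∀ i, τ (τ i) = i
  fpf : ∀ i, τ i ≠ i

namespace ChordDiagram

/-- The boundary permutation `φ(i) = τ(i) + 1`. -/
def boundary {n : ℕ} (D : ChordDiagram n) : Equiv.Perm (Fin (2 * n)) :=
  D.τ.trans (finRotate (2 * n))

/-- The number `F` of boundary components: the number of orbits of the boundary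
permutation, with the convention `F = 1` when `n = 0`. -/
noncomputable def F {n : ℕ} (D : ChordDiagram n) : ℕ :=
  if n = 0 then 1
  else Nat.card (Quotient (MulAction.orbitRel (Subgroup.zpowers D.boundary) (Fin (2 * n))))

/-- Build a chord diagram from an involutive, fixed-point-free function. -/
def ofInvol {n : ℕ} (f : Fin (2 * n) → Fin (2 * n)) (h : Function.Involutive f)
    (hf : ∀ i, f i ≠ i) : ChordDiagram n :=
  ⟨Function.Involutive.toPerm f h, h, hf⟩

/-- The empty chord diagram (order 0). -/
def emptyDiagram : ChordDiagram 0 := ⟨1, fun i => i.elim0, fun i => i.elim0⟩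

/-- The chord diagram `(abab)`: chords `{0,2}, {1,3}` on `ZMod 4`. -/
def abab : ChordDiagram 2 := ofInvol ![2, 3, 0, 1] (by intro x; fin_cases x <;> rfl) (by decide)

/-- The chord diagram `(abcabc)`: chords `{0,3}, {1,4}, {2,5}` on `ZMod 6`. -/
def abcabc : ChordDiagram 3 :=
  ofInvol ![3, 4, 5, 0, 1, 2] (by intro x; fin_cases x <;> rfl) (by decide)

/-- The forbidden diagram `(ababcdcd)`: chords `{0,2},{1,3},{4,6},{5,7}` on `ZMod 8`. -/
def ababcdcd : ChordDiagram 4 :=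
  ofInvol ![2, 3, 0, 1, 6, 7, 4, 5] (by intro x; fin_cases x <;> rfl) (by decide)

/-- The forbidden diagram `(abcdabcd)`: chords `{0,4},{1,5},{2,6},{3,7}` on `ZMod 8`. -/
def abcdabcd : ChordDiagram 4 :=
  ofInvol ![4, 5, 6, 7, 0, 1, 2, 3] (by intro x; fin_cases x <;> rfl) (by decide)

/-- The forbidden diagram `(abacdcbd)`: chords `{0,2},{1,6},{3,5},{4,7}` on `ZMod 8`. -/
def abacdcbd : ChordDiagram 4 :=
  ofInvol ![2, 6, 0, 5, 7, 3, 1, 4] (by intro x; fin_cases x <;> rfl) (by decide)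

/-- The forbidden diagram `(abcadbdc)`: chords `{0,3},{1,5},{2,7},{4,6}` on `ZMod 8`. -/
def abcadbdc : ChordDiagram 4 :=
  ofInvol ![3, 5, 7, 0, 6, 1, 4, 2] (by intro x; fin_cases x <;> rfl) (by decide)

/-- The chords `{i, τ i}` and `{j, τ j}` interlace: exactly one of `j, τ j` lies on
the open cyclic arc from `i` to `τ i`. -/
def Interlaces {n : ℕ} (D : ChordDiagram n) (i j : Fin (2 * n)) : Prop :=
  Xor' (cyclicSbtw i j (D.τ i)) (cyclicSbtw i (D.τ j) (D.τ i))

/-- The type of chords of a chord diagram. -/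
def Chord {n : ℕ} (D : ChordDiagram n) : Type :=
  {p : Sym2 (Fin (2 * n)) // ∃ i, p = s(i, D.τ i)}

/-- The interlacement graph (graph of loops) of a chord diagram: vertices are the chords,
edges are the interlacing pairs of distinct chords. -/
def interGraph {n : ℕ} (D : ChordDiagram n) : SimpleGraph D.Chord where
  Adj c d := c ≠ d ∧
    ((∃ i j, c.1 = s(i, D.τ i) ∧ d.1 = s(j, D.τ j) ∧ D.Interlaces i j) ∨
     (∃ i j, d.1 = s(i, D.τ i) ∧ c.1 = s(j, D.τ j) ∧ D.Interlaces i j))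
  symm := by
    constructor
    intro c d h
    exact ⟨h.1.symm, h.2.symm⟩
  loopless := by
    constructor
    intro c h
    exact h.1 rfl

/-- A cyclic-order-preserving injection between cyclic groups. -/
def CycEmb {k m : ℕ} (f : Fin k → Fin m) : Prop :=
  Function.Injective f ∧ ∀ a b c, cyclicSbtw a b c → cyclicSbtw (f a) (f b) (f c)

/-- `D` contains the diagram `P`: the sub-diagram of `D` induced by some set of its chords
equals `P` up to rotation, i.e. there is a cyclic-order-preserving injection
`f : ZMod (2k) → ZMod (2n)` intertwining the involutions. -/
def Contains {n k : ℕ} (D : ChordDiagram n) (P : ChordDiagram k) : Prop :=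
  ∃ f : Fin (2 * k) → Fin (2 * n), CycEmb f ∧ ∀ i, D.τ (f i) = f (P.τ i)

/-- `D'` is obtained from `D` by deleting the chord `{j, τ j}` and renumbering the
remaining `2n` endpoints by the cyclic-order-preserving bijection onto `ZMod (2n)`. -/
def DeleteChord {n : ℕ} (D : ChordDiagram (n + 1)) (j : Fin (2 * (n + 1)))
    (D' : ChordDiagram n) : Prop :=
  ∃ f : Fin (2 * n) → Fin (2 * (n + 1)), CycEmb f ∧
    Set.range f = ({j, D.τ j} : Set (Fin (2 * (n + 1))))ᶜ ∧
    ∀ i, D.τ (f i) = f (D'.τ i)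

/-- Reduction operation (α): deletion of an isolated chord `{i, i+1}` (where `τ i = i + 1`). -/
def StepAlpha {n : ℕ} (D : ChordDiagram (n + 1)) (D' : ChordDiagram n) : Prop :=
  ∃ i, D.τ i = finRotate (2 * (n + 1)) i ∧ DeleteChord D i D'

/-- Reduction operation (β): deletion of the chord `{i+1, τ(i+1)}` from a parallel pair,
i.e. `τ(i+1) = τ(i) - 1` with the chords `{i, τ i}` and `{i+1, τ(i+1)}` distinct. -/
def StepBeta {n : ℕ} (D : ChordDiagram (n + 1)) (D' : ChordDiagram n) : Prop :=
  ∃ i, D.τ (finRotate (2 * (n + 1)) i) = (finRotate (2 * (n + 1))).symm (D.τ i) ∧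
    D.τ i ≠ finRotate (2 * (n + 1)) i ∧
    DeleteChord D (finRotate (2 * (n + 1)) i) D'

/-- One reduction step (operation (α) or (β)) between chord diagrams. -/
def Step (p q : Σ n, ChordDiagram n) : Prop :=
  ∃ h : p.1 = q.1 + 1,
    StepAlpha (cast (congrArg ChordDiagram h) p.2) q.2 ∨
    StepBeta (cast (congrArg ChordDiagram h) p.2) q.2

/-- `p` reduces to `q` by finitely many operations (α), (β) (possibly none). -/
def Reduces (p q : Σ n, ChordDiagram n) : Prop := Relation.ReflTransGen Step p q

/-- `D` reduces to one of the diagrams `()`, `(abab)`, `(abcabc)`. -/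
def ReducesToBasic {n : ℕ} (D : ChordDiagram n) : Prop :=
  Reduces ⟨n, D⟩ ⟨0, emptyDiagram⟩ ∨ Reduces ⟨n, D⟩ ⟨2, abab⟩ ∨ Reduces ⟨n, D⟩ ⟨3, abcabc⟩

end ChordDiagram

/-- A simple graph is a disjoint union of a (possibly empty) set of isolated vertices and a
complete bipartite or complete tripartite graph: there are three pairwise disjoint sets
`A`, `B`, `C` of vertices (a part may be empty; `C = ∅` gives the complete bipartite case)
such that two vertices are adjacent iff they lie in two different ones of these parts;
all remaining vertices are isolated. -/
def IsIsolatedPlusCompleteMultipartite {V : Type*} (G : SimpleGraph V) : Prop :=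
  ∃ A B C : Set V, Disjoint A B ∧ Disjoint A C ∧ Disjoint B C ∧
    ∀ v w, G.Adj v w ↔
      ((v ∈ A ∧ w ∈ B) ∨ (v ∈ B ∧ w ∈ A) ∨ (v ∈ A ∧ w ∈ C) ∨ (v ∈ C ∧ w ∈ A) ∨
       (v ∈ B ∧ w ∈ C) ∨ (v ∈ C ∧ w ∈ B))

namespace NFAux

instance instDecCS {m : ℕ} (a b c : Fin m) : Decidable (cyclicSbtw a b c) := by
  unfold cyclicSbtw; infer_instance

lemma pos_eq {m : ℕ} (x y : Fin m) :
    (y.val + (m - x.val)) % m =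
      if x.val ≤ y.val then y.val - x.val else y.val + (m - x.val) := by
  have hx := x.isLt
  have hy := y.isLt
  split
  · next h =>
    have e : y.val + (m - x.val) = m + (y.val - x.val) := by omega
    rw [e, Nat.add_mod_left, Nat.mod_eq_of_lt (by omega)]
  · next h => exact Nat.mod_eq_of_lt (by omega)

lemma cyclicSbtw_iff {m : ℕ} (a b c : Fin m) :
    cyclicSbtw a b c ↔ ((a < b ∧ b < c) ∨ (b < c ∧ c < a) ∨ (c < a ∧ a < b)) := by
  have ha := a.isLt
  have hb := b.isLt
  have hc := c.isLt
  unfold cyclicSbtw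
  rw [pos_eq a b, pos_eq a c]
  simp only [Fin.lt_def]
  split_ifs <;> omega

lemma cs_map {k m : ℕ} {f : Fin k → Fin m} (hf : StrictMono f) (a b c : Fin k) :
    cyclicSbtw (f a) (f b) (f c) ↔ cyclicSbtw a b c := by
  simp only [cyclicSbtw_iff, hf.lt_iff_lt]

def IntX {m : ℕ} (x x' y y' : Fin m) : Prop :=
  Xor' (cyclicSbtw x y x') (cyclicSbtw x y' x')

instance instDecIntX {m : ℕ} (x x' y y' : Fin m) : Decidable (IntX x x' y y') := by
  unfold IntX; exact (inferInstance : Decidable (Xor (cyclicSbtw x y x') (cyclicSbtw x y' x')))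

def EE {m : ℕ} (x x' y y' : Fin m) : Prop :=
  IntX x x' y y' ∨ IntX x x' y' y ∨ IntX x' x y y' ∨ IntX x' x y' y ∨
  IntX y y' x x' ∨ IntX y y' x' x ∨ IntX y' y x x' ∨ IntX y' y x' x

instance instDecEE {m : ℕ} (x x' y y' : Fin m) : Decidable (EE x x' y y') := by
  unfold EE; infer_instance

lemma cs_shift : ∀ a b c s : Fin 8, cyclicSbtw (a + s) (b + s) (c + s) ↔ cyclicSbtw a b c := by
  decide

lemma EE_shift (x x' y y' s : Fin 8) :
    EE (x + s) (x' + s) (y + s) (y' + s) ↔ EE x x' y y' := by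
  unfold EE IntX
  simp only [cs_shift]

lemma EE_sub (x x' y y' s : Fin 8) :
    EE (x - s) (x' - s) (y - s) (y' - s) ↔ EE x x' y y' := by
  have h := EE_shift (x - s) (x' - s) (y - s) (y' - s) s
  simpa [sub_add_cancel] using h.symm

lemma EE_map {k m : ℕ} {g : Fin k → Fin m}
    (hg : ∀ p q r : Fin k, cyclicSbtw (g p) (g q) (g r) ↔ cyclicSbtw p q r)
    (x x' y y' : Fin k) : EE (g x) (g x') (g y) (g y') ↔ EE x x' y y' := by
  unfold EE IntX
  simp only [hg]

set_option maxRecDepth 40000 in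
set_option synthInstance.maxSize 10000 in
set_option synthInstance.maxHeartbeats 1000000 in
set_option maxHeartbeats 4000000 in
lemma L2K2 :
    ∀ a' : Fin 8, a' ≠ (0:Fin 8) →
    ∀ b : Fin 8, b ≠ (0:Fin 8) → b ≠ a' →
    ∀ b' : Fin 8, b' ≠ (0:Fin 8) → b' ≠ a' → b' ≠ b →
    EE 0 a' b b' →
    ∀ c : Fin 8, c ≠ (0:Fin 8) → c ≠ a' → c ≠ b → c ≠ b' →
    ∀ c' : Fin 8, c' ≠ (0:Fin 8) → c' ≠ a' → c' ≠ b → c' ≠ b' → c' ≠ c →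
    ¬EE 0 a' c c' → ¬EE b b' c c' →
    ∀ d : Fin 8, d ≠ (0:Fin 8) → d ≠ a' → d ≠ b → d ≠ b' → d ≠ c → d ≠ c' →
    ∀ d' : Fin 8, d' ≠ (0:Fin 8) → d' ≠ a' → d' ≠ b → d' ≠ b' → d' ≠ c → d' ≠ c' → d' ≠ d →
    EE c c' d d' → ¬EE 0 a' d d' → ¬EE b b' d d' →
    ∃ r : Fin 8, a' - r = ChordDiagram.ababcdcd.τ (0 - r) ∧
      b' - r = ChordDiagram.ababcdcd.τ (b - r) ∧
      c' - r = ChordDiagram.ababcdcd.τ (c - r) ∧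
      d' - r = ChordDiagram.ababcdcd.τ (d - r) := by decide

set_option maxRecDepth 40000 in
set_option synthInstance.maxSize 10000 in
set_option synthInstance.maxHeartbeats 1000000 in
set_option maxHeartbeats 4000000 in
lemma LK4 :
    ∀ a' : Fin 8, a' ≠ (0:Fin 8) →
    ∀ b : Fin 8, b ≠ (0:Fin 8) → b ≠ a' →
    ∀ b' : Fin 8, b' ≠ (0:Fin 8) → b' ≠ a' → b' ≠ b →
    EE 0 a' b b' →
    ∀ c : Fin 8, c ≠ (0:Fin 8) → c ≠ a' → c ≠ b → c ≠ b' →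
    ∀ c' : Fin 8, c' ≠ (0:Fin 8) → c' ≠ a' → c' ≠ b → c' ≠ b' → c' ≠ c →
    EE 0 a' c c' → EE b b' c c' →
    ∀ d : Fin 8, d ≠ (0:Fin 8) → d ≠ a' → d ≠ b → d ≠ b' → d ≠ c → d ≠ c' →
    ∀ d' : Fin 8, d' ≠ (0:Fin 8) → d' ≠ a' → d' ≠ b → d' ≠ b' → d' ≠ c → d' ≠ c' → d' ≠ d →
    EE 0 a' d d' → EE b b' d d' → EE c c' d d' →
    ∃ r : Fin 8, a' - r = ChordDiagram.abcdabcd.τ (0 - r) ∧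
      b' - r = ChordDiagram.abcdabcd.τ (b - r) ∧
      c' - r = ChordDiagram.abcdabcd.τ (c - r) ∧
      d' - r = ChordDiagram.abcdabcd.τ (d - r) := by decide

set_option maxRecDepth 40000 in
set_option synthInstance.maxSize 10000 in
set_option synthInstance.maxHeartbeats 1000000 in
set_option maxHeartbeats 4000000 in
lemma LP4 :
    ∀ a' : Fin 8, a' ≠ (0:Fin 8) →
    ∀ b : Fin 8, b ≠ (0:Fin 8) → b ≠ a' →
    ∀ b' : Fin 8, b' ≠ (0:Fin 8) → b' ≠ a' → b' ≠ b →
    EE 0 a' b b' →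
    ∀ c : Fin 8, c ≠ (0:Fin 8) → c ≠ a' → c ≠ b → c ≠ b' →
    ∀ c' : Fin 8, c' ≠ (0:Fin 8) → c' ≠ a' → c' ≠ b → c' ≠ b' → c' ≠ c →
    EE b b' c c' → ¬EE 0 a' c c' →
    ∀ d : Fin 8, d ≠ (0:Fin 8) → d ≠ a' → d ≠ b → d ≠ b' → d ≠ c → d ≠ c' →
    ∀ d' : Fin 8, d' ≠ (0:Fin 8) → d' ≠ a' → d' ≠ b → d' ≠ b' → d' ≠ c → d' ≠ c' → d' ≠ d →
    EE c c' d d' → ¬EE 0 a' d d' → ¬EE b b' d d' →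
    ∃ r : Fin 8, a' - r = ChordDiagram.abacdcbd.τ (0 - r) ∧
      b' - r = ChordDiagram.abacdcbd.τ (b - r) ∧
      c' - r = ChordDiagram.abacdcbd.τ (c - r) ∧
      d' - r = ChordDiagram.abacdcbd.τ (d - r) := by decide

set_option maxRecDepth 40000 in
set_option synthInstance.maxSize 10000 in
set_option synthInstance.maxHeartbeats 1000000 in
set_option maxHeartbeats 4000000 in
lemma LPaw :
    ∀ a' : Fin 8, a' ≠ (0:Fin 8) →
    ∀ b : Fin 8, b ≠ (0:Fin 8) → b ≠ a' →
    ∀ b' : Fin 8, b' ≠ (0:Fin 8) → b' ≠ a' → b' ≠ b →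
    EE 0 a' b b' →
    ∀ c : Fin 8, c ≠ (0:Fin 8) → c ≠ a' → c ≠ b → c ≠ b' →
    ∀ c' : Fin 8, c' ≠ (0:Fin 8) → c' ≠ a' → c' ≠ b → c' ≠ b' → c' ≠ c →
    EE 0 a' c c' → EE b b' c c' →
    ∀ d : Fin 8, d ≠ (0:Fin 8) → d ≠ a' → d ≠ b → d ≠ b' → d ≠ c → d ≠ c' →
    ∀ d' : Fin 8, d' ≠ (0:Fin 8) → d' ≠ a' → d' ≠ b → d' ≠ b' → d' ≠ c → d' ≠ c' → d' ≠ d →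
    EE c c' d d' → ¬EE 0 a' d d' → ¬EE b b' d d' →
    ∃ r : Fin 8, a' - r = ChordDiagram.abcadbdc.τ (0 - r) ∧
      b' - r = ChordDiagram.abcadbdc.τ (b - r) ∧
      c' - r = ChordDiagram.abcadbdc.τ (c - r) ∧
      d' - r = ChordDiagram.abcadbdc.τ (d - r) := by decide



lemma interGraph_adj {n : ℕ} (D : ChordDiagram n) (v w : D.Chord) :
    D.interGraph.Adj v w ↔ (v ≠ w ∧
      ((∃ i j, v.1 = s(i, D.τ i) ∧ w.1 = s(j, D.τ j) ∧ D.Interlaces i j) ∨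
       (∃ i j, w.1 = s(i, D.τ i) ∧ v.1 = s(j, D.τ j) ∧ D.Interlaces i j))) := Iff.rfl

lemma interlaces_eq {n : ℕ} (D : ChordDiagram n) (i j : Fin (2 * n)) :
    D.Interlaces i j = IntX i (D.τ i) j (D.τ j) := rfl

lemma rep_cases {n : ℕ} (D : ChordDiagram n) {k x : Fin (2 * n)}
    (h : s(k, D.τ k) = s(x, D.τ x)) : x = k ∨ x = D.τ k := by
  rcases Sym2.eq_iff.mp h with ⟨h1, -⟩ | ⟨-, h2⟩
  · exact Or.inl h1.symm
  · exact Or.inr h2.symm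

lemma chord_swap {n : ℕ} (D : ChordDiagram n) (i : Fin (2 * n)) :
    s(D.τ i, D.τ (D.τ i)) = s(i, D.τ i) := by rw [D.invol, Sym2.eq_swap]

lemma adj_iff {n : ℕ} (D : ChordDiagram n) (v w : D.Chord) (i j : Fin (2 * n))
    (hv : v.1 = s(i, D.τ i)) (hw : w.1 = s(j, D.τ j)) (hvw : v ≠ w) :
    D.interGraph.Adj v w ↔ EE i (D.τ i) j (D.τ j) := by
  rw [interGraph_adj]
  constructor
  · rintro ⟨-, ⟨x, y, hx, hy, hint⟩ | ⟨x, y, hx, hy, hint⟩⟩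
    · have hx' := rep_cases D (hv.symm.trans hx)
      have hy' := rep_cases D (hw.symm.trans hy)
      rw [interlaces_eq] at hint
      rcases hx' with rfl | rfl <;> rcases hy' with rfl | rfl <;>
        · try simp only [D.invol] at hint
          unfold EE
          tauto
    · have hx' := rep_cases D (hw.symm.trans hx)
      have hy' := rep_cases D (hv.symm.trans hy)
      rw [interlaces_eq] at hint
      rcases hx' with rfl | rfl <;> rcases hy' with rfl | rfl <;>
        · try simp only [D.invol] at hint
          unfold EE
          tauto
  · intro h
    refine ⟨hvw, ?_⟩
    rcases h with h|h|h|h|h|h|h|h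
    · exact Or.inl ⟨i, j, hv, hw, h⟩
    · refine Or.inl ⟨i, D.τ j, hv, by rw [chord_swap]; exact hw, ?_⟩
      rw [interlaces_eq, D.invol]; exact h
    · refine Or.inl ⟨D.τ i, j, by rw [chord_swap]; exact hv, hw, ?_⟩
      rw [interlaces_eq, D.invol]; exact h
    · refine Or.inl ⟨D.τ i, D.τ j, by rw [chord_swap]; exact hv, by rw [chord_swap]; exact hw, ?_⟩
      rw [interlaces_eq, D.invol, D.invol]; exact h
    · exact Or.inr ⟨j, i, hw, hv, h⟩
    · refine Or.inr ⟨j, D.τ i, hw, by rw [chord_swap]; exact hv, ?_⟩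
      rw [interlaces_eq, D.invol]; exact h
    · refine Or.inr ⟨D.τ j, i, by rw [chord_swap]; exact hw, hv, ?_⟩
      rw [interlaces_eq, D.invol]; exact h
    · refine Or.inr ⟨D.τ j, D.τ i, by rw [chord_swap]; exact hw, by rw [chord_swap]; exact hv, ?_⟩
      rw [interlaces_eq, D.invol, D.invol]; exact h

lemma chord_ne {n : ℕ} (D : ChordDiagram n) {i j : Fin (2 * n)}
    (h : s(i, D.τ i) ≠ s(j, D.τ j)) :
    i ≠ j ∧ i ≠ D.τ j ∧ D.τ i ≠ j ∧ D.τ i ≠ D.τ j := by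
  refine ⟨?_, ?_, ?_, ?_⟩ <;> intro e
  · exact h (by rw [e])
  · exact h (by rw [e, chord_swap])
  · exact h (by rw [← chord_swap D i, e])
  · exact h (by rw [D.τ.injective e])



lemma build_aux {n : ℕ} (s : Finset (Fin (2 * n))) (hcard : s.card = 8) :
    ∃ g : Fin 8 → Fin (2 * n),
      Function.Injective g ∧
      (∀ p q r : Fin 8, cyclicSbtw (g p) (g q) (g r) ↔ cyclicSbtw p q r) ∧
      (∀ z ∈ s, ∃ x : Fin 8, g x = z) ∧ (∀ x : Fin 8, g x ∈ s) := by
  have iso := s.orderIsoOfFin hcard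
  refine ⟨fun x => (iso x : Fin (2 * n)), ?_, ?_, ?_, fun x => (iso x).2⟩
  · exact fun p q h =>
      iso.injective (Subtype.ext h)
  · intro p q r
    exact cs_map (fun p q h => Subtype.coe_lt_coe.mpr (iso.strictMono h)) p q r
  · intro z hz
    exact ⟨iso.symm ⟨z, hz⟩, by simp only [OrderIso.apply_symm_apply]⟩

lemma build {n : ℕ} (D : ChordDiagram n) (i1 i2 i3 i4 : Fin (2 * n))
    (d12 : s(i1, D.τ i1) ≠ s(i2, D.τ i2)) (d13 : s(i1, D.τ i1) ≠ s(i3, D.τ i3))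
    (d14 : s(i1, D.τ i1) ≠ s(i4, D.τ i4)) (d23 : s(i2, D.τ i2) ≠ s(i3, D.τ i3))
    (d24 : s(i2, D.τ i2) ≠ s(i4, D.τ i4)) (d34 : s(i3, D.τ i3) ≠ s(i4, D.τ i4)) :
    ∃ (g : Fin 8 → Fin (2 * n)) (a a' b b' c c' d d' : Fin 8),
      Function.Injective g ∧
      (∀ p q r : Fin 8, cyclicSbtw (g p) (g q) (g r) ↔ cyclicSbtw p q r) ∧
      g a = i1 ∧ g a' = D.τ i1 ∧ g b = i2 ∧ g b' = D.τ i2 ∧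
      g c = i3 ∧ g c' = D.τ i3 ∧ g d = i4 ∧ g d' = D.τ i4 ∧
      (∀ x : Fin 8, x = a ∨ x = a' ∨ x = b ∨ x = b' ∨ x = c ∨ x = c' ∨ x = d ∨ x = d') := by
  obtain ⟨e12, e12', f12, f12'⟩ := chord_ne D d12
  obtain ⟨e13, e13', f13, f13'⟩ := chord_ne D d13
  obtain ⟨e14, e14', f14, f14'⟩ := chord_ne D d14
  obtain ⟨e23, e23', f23, f23'⟩ := chord_ne D d23
  obtain ⟨e24, e24', f24, f24'⟩ := chord_ne D d24
  obtain ⟨e34, e34', f34, f34'⟩ := chord_ne D d34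
  have p1 : i1 ≠ D.τ i1 := (D.fpf i1).symm
  have p2 : i2 ≠ D.τ i2 := (D.fpf i2).symm
  have p3 : i3 ≠ D.τ i3 := (D.fpf i3).symm
  have p4 : i4 ≠ D.τ i4 := (D.fpf i4).symm
  have hcard : ({i1, D.τ i1, i2, D.τ i2, i3, D.τ i3, i4, D.τ i4} :
      Finset (Fin (2 * n))).card = 8 := by
    rw [Finset.card_insert_of_notMem (by
      simp only [Finset.mem_insert, Finset.mem_singleton, not_or]
      exact ⟨p1, e12, e12', e13, e13', e14, e14'⟩)]
    rw [Finset.card_insert_of_notMem (by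
      simp only [Finset.mem_insert, Finset.mem_singleton, not_or]
      exact ⟨f12, f12', f13, f13', f14, f14'⟩)]
    rw [Finset.card_insert_of_notMem (by
      simp only [Finset.mem_insert, Finset.mem_singleton, not_or]
      exact ⟨p2, e23, e23', e24, e24'⟩)]
    rw [Finset.card_insert_of_notMem (by
      simp only [Finset.mem_insert, Finset.mem_singleton, not_or]
      exact ⟨f23, f23', f24, f24'⟩)]
    rw [Finset.card_insert_of_notMem (by
      simp only [Finset.mem_insert, Finset.mem_singleton, not_or]
      exact ⟨p3, e34, e34'⟩)]
    rw [Finset.card_insert_of_notMem (by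
      simp only [Finset.mem_insert, Finset.mem_singleton, not_or]
      exact ⟨f34, f34'⟩)]
    rw [Finset.card_insert_of_notMem (by
      simp only [Finset.mem_singleton]
      exact p4)]
    rfl
  obtain ⟨g, hinj, hiff, hsurj, hmem⟩ := build_aux _ hcard
  obtain ⟨a, ha⟩ := hsurj i1 (by simp)
  obtain ⟨a', ha'⟩ := hsurj (D.τ i1) (by simp)
  obtain ⟨b, hb⟩ := hsurj i2 (by simp)
  obtain ⟨b', hb'⟩ := hsurj (D.τ i2) (by simp)
  obtain ⟨c, hc⟩ := hsurj i3 (by simp)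
  obtain ⟨c', hc'⟩ := hsurj (D.τ i3) (by simp)
  obtain ⟨d, hd⟩ := hsurj i4 (by simp)
  obtain ⟨d', hd'⟩ := hsurj (D.τ i4) (by simp)
  refine ⟨g, a, a', b, b', c, c', d, d', hinj, hiff, ha, ha', hb, hb', hc, hc', hd, hd', ?_⟩
  intro x
  have hx := hmem x
  simp only [Finset.mem_insert, Finset.mem_singleton] at hx
  rcases hx with h|h|h|h|h|h|h|h
  · exact Or.inl (hinj (h.trans ha.symm))
  · exact Or.inr (Or.inl (hinj (h.trans ha'.symm)))
  · exact Or.inr (Or.inr (Or.inl (hinj (h.trans hb.symm))))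
  · exact Or.inr (Or.inr (Or.inr (Or.inl (hinj (h.trans hb'.symm)))))
  · exact Or.inr (Or.inr (Or.inr (Or.inr (Or.inl (hinj (h.trans hc.symm))))))
  · exact Or.inr (Or.inr (Or.inr (Or.inr (Or.inr (Or.inl (hinj (h.trans hc'.symm)))))))
  · exact Or.inr (Or.inr (Or.inr (Or.inr (Or.inr (Or.inr (Or.inl (hinj (h.trans hd.symm))))))))
  · exact Or.inr (Or.inr (Or.inr (Or.inr (Or.inr (Or.inr (Or.inr (hinj (h.trans hd'.symm))))))))

lemma contains_of_data {n : ℕ} (D : ChordDiagram n) (P : ChordDiagram 4)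
    (g : Fin 8 → Fin (2 * n))
    (hinj : Function.Injective g)
    (hiff : ∀ p q r : Fin 8, cyclicSbtw (g p) (g q) (g r) ↔ cyclicSbtw p q r)
    (a a' b b' c c' d d' : Fin 8)
    (hcov : ∀ x : Fin 8, x = a ∨ x = a' ∨ x = b ∨ x = b' ∨ x = c ∨ x = c' ∨ x = d ∨ x = d')
    (hta : D.τ (g a) = g a') (hta' : D.τ (g a') = g a)
    (htb : D.τ (g b) = g b') (htb' : D.τ (g b') = g b)
    (htc : D.τ (g c) = g c') (htc' : D.τ (g c') = g c)
    (htd : D.τ (g d) = g d') (htd' : D.τ (g d') = g d)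
    (r : Fin 8)
    (ea : a' - r = P.τ (a - r)) (eb : b' - r = P.τ (b - r))
    (ec : c' - r = P.τ (c - r)) (ed : d' - r = P.τ (d - r)) :
    D.Contains P := by
  refine ⟨fun i => g (i + r), ⟨?_, ?_⟩, ?_⟩
  · intro p q h
    exact add_right_cancel (hinj h)
  · intro p q t h
    rw [hiff]
    exact (cs_shift p q t r).mpr h
  · intro i
    have key : ∀ x x' : Fin 8, D.τ (g x) = g x' → D.τ (g x') = g x →
        x' - r = P.τ (x - r) → i + r = x ∨ i + r = x' → D.τ (g (i + r)) = g (P.τ i + r) := by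
      intro x x' ht ht' he hor
      rcases hor with h | h
      · have hi : i = x - r := eq_sub_of_add_eq h
        rw [h, ht, hi, ← he, sub_add_cancel]
      · have hi : i = x' - r := eq_sub_of_add_eq h
        have : P.τ i = x - r := by rw [hi, he, P.invol]
        rw [h, ht', this, sub_add_cancel]
    rcases hcov (i + r) with h|h|h|h|h|h|h|h
    · exact key a a' hta hta' ea (Or.inl h)
    · exact key a a' hta hta' ea (Or.inr h)
    · exact key b b' htb htb' eb (Or.inl h)
    · exact key b b' htb htb' eb (Or.inr h)
    · exact key c c' htc htc' ec (Or.inl h)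
    · exact key c c' htc htc' ec (Or.inr h)
    · exact key d d' htd htd' ed (Or.inl h)
    · exact key d d' htd htd' ed (Or.inr h)



lemma mega {n : ℕ} (D : ChordDiagram n) (P : ChordDiagram 4)
    (Q : Prop → Prop → Prop → Prop → Prop → Prop → Prop)
    (hQiff : ∀ {p1 p2 p3 p4 p5 p6 q1 q2 q3 q4 q5 q6 : Prop},
      (p1 ↔ q1) → (p2 ↔ q2) → (p3 ↔ q3) → (p4 ↔ q4) → (p5 ↔ q5) → (p6 ↔ q6) →
      Q p1 p2 p3 p4 p5 p6 → Q q1 q2 q3 q4 q5 q6)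
    (hL : ∀ a' b b' c c' d d' : Fin 8, a' ≠ 0 → b ≠ 0 → b ≠ a' → b' ≠ 0 → b' ≠ a' → b' ≠ b →
      c ≠ 0 → c ≠ a' → c ≠ b → c ≠ b' → c' ≠ 0 → c' ≠ a' → c' ≠ b → c' ≠ b' → c' ≠ c →
      d ≠ 0 → d ≠ a' → d ≠ b → d ≠ b' → d ≠ c → d ≠ c' →
      d' ≠ 0 → d' ≠ a' → d' ≠ b → d' ≠ b' → d' ≠ c → d' ≠ c' → d' ≠ d →
      Q (EE 0 a' b b') (EE 0 a' c c') (EE 0 a' d d') (EE b b' c c') (EE b b' d d')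
        (EE c c' d d') →
      ∃ r : Fin 8, a' - r = P.τ (0 - r) ∧ b' - r = P.τ (b - r) ∧ c' - r = P.τ (c - r) ∧
        d' - r = P.τ (d - r))
    (v1 v2 v3 v4 : D.Chord)
    (h12 : v1 ≠ v2) (h13 : v1 ≠ v3) (h14 : v1 ≠ v4)
    (h23 : v2 ≠ v3) (h24 : v2 ≠ v4) (h34 : v3 ≠ v4)
    (hQ : Q (D.interGraph.Adj v1 v2) (D.interGraph.Adj v1 v3) (D.interGraph.Adj v1 v4)
      (D.interGraph.Adj v2 v3) (D.interGraph.Adj v2 v4) (D.interGraph.Adj v3 v4)) :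
    D.Contains P := by
  obtain ⟨i1, hv1⟩ := v1.2
  obtain ⟨i2, hv2⟩ := v2.2
  obtain ⟨i3, hv3⟩ := v3.2
  obtain ⟨i4, hv4⟩ := v4.2
  have s12 : s(i1, D.τ i1) ≠ s(i2, D.τ i2) :=
    fun e => h12 (Subtype.ext (hv1.trans (e.trans hv2.symm)))
  have s13 : s(i1, D.τ i1) ≠ s(i3, D.τ i3) :=
    fun e => h13 (Subtype.ext (hv1.trans (e.trans hv3.symm)))
  have s14 : s(i1, D.τ i1) ≠ s(i4, D.τ i4) :=
    fun e => h14 (Subtype.ext (hv1.trans (e.trans hv4.symm)))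
  have s23 : s(i2, D.τ i2) ≠ s(i3, D.τ i3) :=
    fun e => h23 (Subtype.ext (hv2.trans (e.trans hv3.symm)))
  have s24 : s(i2, D.τ i2) ≠ s(i4, D.τ i4) :=
    fun e => h24 (Subtype.ext (hv2.trans (e.trans hv4.symm)))
  have s34 : s(i3, D.τ i3) ≠ s(i4, D.τ i4) :=
    fun e => h34 (Subtype.ext (hv3.trans (e.trans hv4.symm)))
  obtain ⟨g, a, a', b, b', c, c', d, d', hinj, hiff, ga, ga', gb, gb', gc, gc', gd, gd', hcov⟩ :=
    build D i1 i2 i3 i4 s12 s13 s14 s23 s24 s34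
  -- adjacency transferred to `EE` on the letters
  have A12 : D.interGraph.Adj v1 v2 ↔ EE a a' b b' := by
    rw [adj_iff D v1 v2 i1 i2 hv1 hv2 h12, ← ga', ← ga, ← gb', ← gb]
    exact EE_map hiff a a' b b'
  have A13 : D.interGraph.Adj v1 v3 ↔ EE a a' c c' := by
    rw [adj_iff D v1 v3 i1 i3 hv1 hv3 h13, ← ga', ← ga, ← gc', ← gc]
    exact EE_map hiff a a' c c'
  have A14 : D.interGraph.Adj v1 v4 ↔ EE a a' d d' := by
    rw [adj_iff D v1 v4 i1 i4 hv1 hv4 h14, ← ga', ← ga, ← gd', ← gd]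
    exact EE_map hiff a a' d d'
  have A23 : D.interGraph.Adj v2 v3 ↔ EE b b' c c' := by
    rw [adj_iff D v2 v3 i2 i3 hv2 hv3 h23, ← gb', ← gb, ← gc', ← gc]
    exact EE_map hiff b b' c c'
  have A24 : D.interGraph.Adj v2 v4 ↔ EE b b' d d' := by
    rw [adj_iff D v2 v4 i2 i4 hv2 hv4 h24, ← gb', ← gb, ← gd', ← gd]
    exact EE_map hiff b b' d d'
  have A34 : D.interGraph.Adj v3 v4 ↔ EE c c' d d' := by
    rw [adj_iff D v3 v4 i3 i4 hv3 hv4 h34, ← gc', ← gc, ← gd', ← gd]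
    exact EE_map hiff c c' d d'
  -- letter distinctness
  have NE : ∀ {p q : Fin 8} {x y : Fin (2 * n)}, g p = x → g q = y → x ≠ y → p ≠ q :=
    fun hp hq hxy e => hxy (by rw [← hp, ← hq, e])
  obtain ⟨e12, e12', f12, f12'⟩ := chord_ne D s12
  obtain ⟨e13, e13', f13, f13'⟩ := chord_ne D s13
  obtain ⟨e14, e14', f14, f14'⟩ := chord_ne D s14
  obtain ⟨e23, e23', f23, f23'⟩ := chord_ne D s23
  obtain ⟨e24, e24', f24, f24'⟩ := chord_ne D s24
  obtain ⟨e34, e34', f34, f34'⟩ := chord_ne D s34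
  have naa' : a ≠ a' := NE ga ga' (D.fpf i1).symm
  have nbb' : b ≠ b' := NE gb gb' (D.fpf i2).symm
  have ncc' : c ≠ c' := NE gc gc' (D.fpf i3).symm
  have ndd' : d ≠ d' := NE gd gd' (D.fpf i4).symm
  have nab : a ≠ b := NE ga gb e12
  have nab' : a ≠ b' := NE ga gb' e12'
  have na'b : a' ≠ b := NE ga' gb f12
  have na'b' : a' ≠ b' := NE ga' gb' f12'
  have nac : a ≠ c := NE ga gc e13
  have nac' : a ≠ c' := NE ga gc' e13'
  have na'c : a' ≠ c := NE ga' gc f13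
  have na'c' : a' ≠ c' := NE ga' gc' f13'
  have nad : a ≠ d := NE ga gd e14
  have nad' : a ≠ d' := NE ga gd' e14'
  have na'd : a' ≠ d := NE ga' gd f14
  have na'd' : a' ≠ d' := NE ga' gd' f14'
  have nbc : b ≠ c := NE gb gc e23
  have nbc' : b ≠ c' := NE gb gc' e23'
  have nb'c : b' ≠ c := NE gb' gc f23
  have nb'c' : b' ≠ c' := NE gb' gc' f23'
  have nbd : b ≠ d := NE gb gd e24
  have nbd' : b ≠ d' := NE gb gd' e24'
  have nb'd : b' ≠ d := NE gb' gd f24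
  have nb'd' : b' ≠ d' := NE gb' gd' f24'
  have ncd : c ≠ d := NE gc gd e34
  have ncd' : c ≠ d' := NE gc gd' e34'
  have nc'd : c' ≠ d := NE gc' gd f34
  have nc'd' : c' ≠ d' := NE gc' gd' f34'
  -- shift all letters by `a`
  have SNE : ∀ {p q : Fin 8}, p ≠ q → p - a ≠ q - a := by
    intro p q h e
    exact h (by have := congrArg (· + a) e; simpa [sub_add_cancel] using this)
  have GNE : ∀ {p : Fin 8}, p ≠ a → p - a ≠ 0 := fun h e => h (sub_eq_zero.mp e)
  have shiftEE : ∀ x x' y y' : Fin 8, EE x x' y y' ↔ EE (x - a) (x' - a) (y - a) (y' - a) :=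
    fun x x' y y' => (EE_sub x x' y y' a).symm
  have I12 : D.interGraph.Adj v1 v2 ↔ EE 0 (a' - a) (b - a) (b' - a) := by
    rw [A12, shiftEE a a' b b', sub_self]
  have I13 : D.interGraph.Adj v1 v3 ↔ EE 0 (a' - a) (c - a) (c' - a) := by
    rw [A13, shiftEE a a' c c', sub_self]
  have I14 : D.interGraph.Adj v1 v4 ↔ EE 0 (a' - a) (d - a) (d' - a) := by
    rw [A14, shiftEE a a' d d', sub_self]
  have I23 : D.interGraph.Adj v2 v3 ↔ EE (b - a) (b' - a) (c - a) (c' - a) := by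
    rw [A23, shiftEE b b' c c']
  have I24 : D.interGraph.Adj v2 v4 ↔ EE (b - a) (b' - a) (d - a) (d' - a) := by
    rw [A24, shiftEE b b' d d']
  have I34 : D.interGraph.Adj v3 v4 ↔ EE (c - a) (c' - a) (d - a) (d' - a) := by
    rw [A34, shiftEE c c' d d']
  have hQ' := hQiff I12 I13 I14 I23 I24 I34 hQ
  obtain ⟨r, ea, eb, ec, ed⟩ := hL (a' - a) (b - a) (b' - a) (c - a) (c' - a) (d - a) (d' - a)
    (GNE naa'.symm) (GNE nab.symm) (SNE na'b.symm) (GNE nab'.symm) (SNE na'b'.symm)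
    (SNE nbb'.symm) (GNE nac.symm) (SNE na'c.symm) (SNE nbc.symm) (SNE nb'c.symm)
    (GNE nac'.symm) (SNE na'c'.symm) (SNE nbc'.symm) (SNE nb'c'.symm) (SNE ncc'.symm)
    (GNE nad.symm) (SNE na'd.symm) (SNE nbd.symm) (SNE nb'd.symm) (SNE ncd.symm)
    (SNE nc'd.symm) (GNE nad'.symm) (SNE na'd'.symm) (SNE nbd'.symm) (SNE nb'd'.symm)
    (SNE ncd'.symm) (SNE nc'd'.symm) (SNE ndd'.symm) hQ'
  refine contains_of_data D P g hinj hiff a a' b b' c c' d d' hcov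
    (by rw [ga, ga']) (by rw [ga', ga]; exact D.invol i1)
    (by rw [gb, gb']) (by rw [gb', gb]; exact D.invol i2)
    (by rw [gc, gc']) (by rw [gc', gc]; exact D.invol i3)
    (by rw [gd, gd']) (by rw [gd', gd]; exact D.invol i4)
    (r + a) ?_ ?_ ?_ ?_
  · rw [show a' - (r + a) = a' - a - r by abel, show a - (r + a) = 0 - r by abel]
    exact ea
  · rw [show b' - (r + a) = b' - a - r by abel, show b - (r + a) = b - a - r by abel]
    exact eb
  · rw [show c' - (r + a) = c' - a - r by abel, show c - (r + a) = c - a - r by abel]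
    exact ec
  · rw [show d' - (r + a) = d' - a - r by abel, show d - (r + a) = d - a - r by abel]
    exact ed



theorem graphLemma {V : Type*} (G : SimpleGraph V)
    (h2K2 : ∀ u w v x : V, G.Adj u w → G.Adj v x → ¬G.Adj u v → ¬G.Adj u x →
      ¬G.Adj w v → ¬G.Adj w x → False)
    (hK4 : ∀ a b c d : V, G.Adj a b → G.Adj a c → G.Adj a d → G.Adj b c → G.Adj b d →
      G.Adj c d → False)
    (hP4 : ∀ a b c d : V, G.Adj a b → G.Adj b c → G.Adj c d → ¬G.Adj a c → ¬G.Adj a d →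
      ¬G.Adj b d → False)
    (hpaw : ∀ a b c d : V, G.Adj a b → G.Adj a c → G.Adj b c → G.Adj c d → ¬G.Adj a d →
      ¬G.Adj b d → False) :
    IsIsolatedPlusCompleteMultipartite G := by
  classical
  by_cases hE : ∃ p q : V, G.Adj p q
  case neg =>
    refine ⟨∅, ∅, ∅, by simp, by simp, by simp, fun v w => ⟨fun h => (hE ⟨v, w, h⟩).elim, ?_⟩⟩
    rintro (⟨h, -⟩|⟨h, -⟩|⟨h, -⟩|⟨h, -⟩|⟨h, -⟩|⟨h, -⟩) <;> exact absurd h (Set.notMem_empty _)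
  obtain ⟨v₀, v₁, h01⟩ := hE
  have T : ∀ u v w : V, (∃ x, G.Adj v x) → ¬G.Adj u v → ¬G.Adj v w → G.Adj u w → False := by
    rintro u v w ⟨x, hvx⟩ huv hvw huw
    by_cases hxu : G.Adj x u <;> by_cases hxw : G.Adj x w
    · exact hpaw u w x v huw hxu.symm hxw.symm hvx.symm huv (fun h => hvw h.symm)
    · exact hP4 w u x v huw.symm hxu.symm hvx.symm (fun h => hxw h.symm)
        (fun h => hvw h.symm) huv
    · exact hP4 u w x v huw hxw.symm hvx.symm (fun h => hxu h.symm) huv (fun h => hvw h.symm)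
    · exact h2K2 u w v x huw hvx huv (fun h => hxu h.symm) (fun h => hvw h.symm)
        (fun h => hxw h.symm)
  set A : Set V := {z | (∃ x, G.Adj z x) ∧ ¬G.Adj v₀ z} with hA
  set B : Set V := {z | (∃ x, G.Adj z x) ∧ ¬G.Adj v₁ z} with hB
  have memA0 : v₀ ∈ A := ⟨⟨v₁, h01⟩, G.loopless.irrefl v₀⟩
  have memB1 : v₁ ∈ B := ⟨⟨v₀, h01.symm⟩, G.loopless.irrefl v₁⟩
  have dAB : Disjoint A B := by
    rw [Set.disjoint_left]
    rintro z ⟨Hz, h0z⟩ ⟨-, h1z⟩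
    exact T v₀ z v₁ Hz h0z (fun h => h1z h.symm) h01
  -- same–class non‑adjacency
  have sameA : ∀ p q : V, p ∈ A → q ∈ A → ¬G.Adj p q := by
    rintro p q ⟨Hp, h0p⟩ ⟨-, h0q⟩ hpq
    exact T p v₀ q ⟨v₁, h01⟩ (fun h => h0p h.symm) h0q hpq
  have sameB : ∀ p q : V, p ∈ B → q ∈ B → ¬G.Adj p q := by
    rintro p q ⟨Hp, h1p⟩ ⟨-, h1q⟩ hpq
    exact T p v₁ q ⟨v₀, h01.symm⟩ (fun h => h1p h.symm) h1q hpq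
  by_cases hC : ∃ z, (∃ x, G.Adj z x) ∧ G.Adj v₀ z ∧ G.Adj v₁ z
  · obtain ⟨v₂, Hv₂, h02, h12⟩ := hC
    set C : Set V := {z | (∃ x, G.Adj z x) ∧ ¬G.Adj v₂ z} with hCdef
    have memC2 : v₂ ∈ C := ⟨Hv₂, G.loopless.irrefl v₂⟩
    have sameC : ∀ p q : V, p ∈ C → q ∈ C → ¬G.Adj p q := by
      rintro p q ⟨Hp, h2p⟩ ⟨-, h2q⟩ hpq
      exact T p v₂ q Hv₂ (fun h => h2p h.symm) h2q hpq
    have dAC : Disjoint A C := by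
      rw [Set.disjoint_left]
      rintro z ⟨Hz, h0z⟩ ⟨-, h2z⟩
      exact T v₀ z v₂ Hz h0z (fun h => h2z h.symm) h02
    have dBC : Disjoint B C := by
      rw [Set.disjoint_left]
      rintro z ⟨Hz, h1z⟩ ⟨-, h2z⟩
      exact T v₁ z v₂ Hz h1z (fun h => h2z h.symm) h12
    have mem : ∀ z : V, (∃ x, G.Adj z x) → z ∈ A ∨ z ∈ B ∨ z ∈ C := by
      intro z Hz
      by_cases g0 : G.Adj v₀ z
      · by_cases g1 : G.Adj v₁ z
        · refine Or.inr (Or.inr ⟨Hz, fun g2 => ?_⟩)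
          exact hK4 v₀ v₁ v₂ z h01 h02 g0 h12 g1 g2
        · exact Or.inr (Or.inl ⟨Hz, g1⟩)
      · exact Or.inl ⟨Hz, g0⟩
    have keyAB : ∀ p q : V, p ∈ A → q ∈ B → G.Adj p q := by
      intro p q hp hq
      by_contra hn
      have h0q : ¬G.Adj v₀ q := fun h => T v₀ p q hp.1 hp.2 hn h
      exact T v₀ q v₁ hq.1 h0q (fun h => hq.2 h.symm) h01
    have keyAC : ∀ p q : V, p ∈ A → q ∈ C → G.Adj p q := by
      intro p q hp hq
      by_contra hn
      have h0q : ¬G.Adj v₀ q := fun h => T v₀ p q hp.1 hp.2 hn h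
      exact T v₀ q v₂ hq.1 h0q (fun h => hq.2 h.symm) h02
    have keyBC : ∀ p q : V, p ∈ B → q ∈ C → G.Adj p q := by
      intro p q hp hq
      by_contra hn
      have h1q : ¬G.Adj v₁ q := fun h => T v₁ p q hp.1 hp.2 hn h
      exact T v₁ q v₂ hq.1 h1q (fun h => hq.2 h.symm) h12
    refine ⟨A, B, C, dAB, dAC, dBC, fun p q => ⟨fun hpq => ?_, ?_⟩⟩
    · have hp := mem p ⟨q, hpq⟩
      have hq := mem q ⟨p, hpq.symm⟩
      rcases hp with hp|hp|hp <;> rcases hq with hq|hq|hq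
      · exact absurd hpq (sameA p q hp hq)
      · exact Or.inl ⟨hp, hq⟩
      · exact Or.inr (Or.inr (Or.inl ⟨hp, hq⟩))
      · exact Or.inr (Or.inl ⟨hp, hq⟩)
      · exact absurd hpq (sameB p q hp hq)
      · exact Or.inr (Or.inr (Or.inr (Or.inr (Or.inl ⟨hp, hq⟩))))
      · exact Or.inr (Or.inr (Or.inr (Or.inl ⟨hp, hq⟩)))
      · exact Or.inr (Or.inr (Or.inr (Or.inr (Or.inr ⟨hp, hq⟩))))
      · exact absurd hpq (sameC p q hp hq)
    · rintro (⟨hp, hq⟩|⟨hp, hq⟩|⟨hp, hq⟩|⟨hp, hq⟩|⟨hp, hq⟩|⟨hp, hq⟩)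
      · exact keyAB p q hp hq
      · exact (keyAB q p hq hp).symm
      · exact keyAC p q hp hq
      · exact (keyAC q p hq hp).symm
      · exact keyBC p q hp hq
      · exact (keyBC q p hq hp).symm
  · have mem : ∀ z : V, (∃ x, G.Adj z x) → z ∈ A ∨ z ∈ B := by
      intro z Hz
      by_cases g0 : G.Adj v₀ z
      · refine Or.inr ⟨Hz, fun g1 => ?_⟩
        exact hC ⟨z, Hz, g0, g1⟩
      · exact Or.inl ⟨Hz, g0⟩
    have keyAB : ∀ p q : V, p ∈ A → q ∈ B → G.Adj p q := by
      intro p q hp hq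
      by_contra hn
      have h0q : ¬G.Adj v₀ q := fun h => T v₀ p q hp.1 hp.2 hn h
      exact T v₀ q v₁ hq.1 h0q (fun h => hq.2 h.symm) h01
    refine ⟨A, B, ∅, dAB, by simp, by simp, fun p q => ⟨fun hpq => ?_, ?_⟩⟩
    · have hp := mem p ⟨q, hpq⟩
      have hq := mem q ⟨p, hpq.symm⟩
      rcases hp with hp|hp <;> rcases hq with hq|hq
      · exact absurd hpq (sameA p q hp hq)
      · exact Or.inl ⟨hp, hq⟩
      · exact Or.inr (Or.inl ⟨hp, hq⟩)
      · exact absurd hpq (sameB p q hp hq)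
    · rintro (⟨hp, hq⟩|⟨hp, hq⟩|⟨-, hq⟩|⟨hq, -⟩|⟨-, hq⟩|⟨hq, -⟩)
      · exact keyAB p q hp hq
      · exact (keyAB q p hq hp).symm
      · exact absurd hq (Set.notMem_empty _)
      · exact absurd hq (Set.notMem_empty _)
      · exact absurd hq (Set.notMem_empty _)
      · exact absurd hq (Set.notMem_empty _)


end NFAux

/-- **(B ⇒ C).** If a chord diagram `D` contains none of the four forbidden diagrams
`(ababcdcd)`, `(abcdabcd)`, `(abacdcbd)`, `(abcadbdc)`, then its interlacement graph is a
disjoint union of a (possibly empty) set of isolated vertices and a complete bipartite or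
complete tripartite graph. -/
theorem no_forbidden_implies_interGraph_multipartite (n : ℕ) (D : ChordDiagram n)
    (h1 : ¬ D.Contains ChordDiagram.ababcdcd) (h2 : ¬ D.Contains ChordDiagram.abcdabcd)
    (h3 : ¬ D.Contains ChordDiagram.abacdcbd) (h4 : ¬ D.Contains ChordDiagram.abcadbdc) :
    IsIsolatedPlusCompleteMultipartite D.interGraph := by
  refine NFAux.graphLemma D.interGraph ?_ ?_ ?_ ?_
  · -- 2K2 pattern
    intro u w v x huw hvx n1 n2 n3 n4
    refine h1 (NFAux.mega D ChordDiagram.ababcdcd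
      (fun p12 p13 p14 p23 p24 p34 => p12 ∧ p34 ∧ ¬p13 ∧ ¬p14 ∧ ¬p23 ∧ ¬p24)
      (fun i1 i2 i3 i4 i5 i6 h => ⟨i1.mp h.1, i6.mp h.2.1, fun q => h.2.2.1 (i2.mpr q),
        fun q => h.2.2.2.1 (i3.mpr q), fun q => h.2.2.2.2.1 (i4.mpr q),
        fun q => h.2.2.2.2.2 (i5.mpr q)⟩)
      (by
        intro a' b b' c c' d d' g1 g2 g3 g4 g5 g6 g7 g8 g9 g10 g11 g12 g13 g14 g15 g16 g17
          g18 g19 g20 g21 g22 g23 g24 g25 g26 g27 g28 hQ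
        obtain ⟨q1, q2, q3, q4, q5, q6⟩ := hQ
        exact NFAux.L2K2 a' g1 b g2 g3 b' g4 g5 g6 q1 c g7 g8 g9 g10 c' g11 g12 g13 g14 g15
          q3 q5 d g16 g17 g18 g19 g20 g21 d' g22 g23 g24 g25 g26 g27 g28 q2 q4 q6)
      u w v x huw.ne (fun e => n3 (e ▸ huw.symm)) (fun e => n4 (e ▸ huw.symm))
      (fun e => n1 (e ▸ huw)) (fun e => n2 (e ▸ huw)) hvx.ne
      ⟨huw, hvx, n1, n2, n3, n4⟩)
  · -- K4 pattern
    intro a b c d m1 m2 m3 m4 m5 m6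
    refine h2 (NFAux.mega D ChordDiagram.abcdabcd
      (fun p12 p13 p14 p23 p24 p34 => p12 ∧ p13 ∧ p14 ∧ p23 ∧ p24 ∧ p34)
      (fun i1 i2 i3 i4 i5 i6 h => ⟨i1.mp h.1, i2.mp h.2.1, i3.mp h.2.2.1, i4.mp h.2.2.2.1,
        i5.mp h.2.2.2.2.1, i6.mp h.2.2.2.2.2⟩)
      (by
        intro a' b b' c c' d d' g1 g2 g3 g4 g5 g6 g7 g8 g9 g10 g11 g12 g13 g14 g15 g16 g17
          g18 g19 g20 g21 g22 g23 g24 g25 g26 g27 g28 hQ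
        obtain ⟨q1, q2, q3, q4, q5, q6⟩ := hQ
        exact NFAux.LK4 a' g1 b g2 g3 b' g4 g5 g6 q1 c g7 g8 g9 g10 c' g11 g12 g13 g14 g15
          q2 q4 d g16 g17 g18 g19 g20 g21 d' g22 g23 g24 g25 g26 g27 g28 q3 q5 q6)
      a b c d m1.ne m2.ne m3.ne m4.ne m5.ne m6.ne
      ⟨m1, m2, m3, m4, m5, m6⟩)
  · -- P4 pattern
    intro a b c d m1 m2 m3 n1 n2 n3
    refine h3 (NFAux.mega D ChordDiagram.abacdcbd
      (fun p12 p13 p14 p23 p24 p34 => p12 ∧ p23 ∧ p34 ∧ ¬p13 ∧ ¬p14 ∧ ¬p24)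
      (fun i1 i2 i3 i4 i5 i6 h => ⟨i1.mp h.1, i4.mp h.2.1, i6.mp h.2.2.1,
        fun q => h.2.2.2.1 (i2.mpr q), fun q => h.2.2.2.2.1 (i3.mpr q),
        fun q => h.2.2.2.2.2 (i5.mpr q)⟩)
      (by
        intro a' b b' c c' d d' g1 g2 g3 g4 g5 g6 g7 g8 g9 g10 g11 g12 g13 g14 g15 g16 g17
          g18 g19 g20 g21 g22 g23 g24 g25 g26 g27 g28 hQ
        obtain ⟨q1, q2, q3, q4, q5, q6⟩ := hQ
        exact NFAux.LP4 a' g1 b g2 g3 b' g4 g5 g6 q1 c g7 g8 g9 g10 c' g11 g12 g13 g14 g15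
          q2 q4 d g16 g17 g18 g19 g20 g21 d' g22 g23 g24 g25 g26 g27 g28 q3 q5 q6)
      a b c d m1.ne (fun e => n2 (by rw [e]; exact m3)) (fun e => n1 (by rw [e]; exact m3.symm))
      m2.ne (fun e => n2 (by rw [← e]; exact m1)) m3.ne
      ⟨m1, m2, m3, n1, n2, n3⟩)
  · -- paw pattern
    intro a b c d m1 m2 m3 m4 n1 n2
    refine h4 (NFAux.mega D ChordDiagram.abcadbdc
      (fun p12 p13 p14 p23 p24 p34 => p12 ∧ p13 ∧ p23 ∧ p34 ∧ ¬p14 ∧ ¬p24)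
      (fun i1 i2 i3 i4 i5 i6 h => ⟨i1.mp h.1, i2.mp h.2.1, i4.mp h.2.2.1, i6.mp h.2.2.2.1,
        fun q => h.2.2.2.2.1 (i3.mpr q), fun q => h.2.2.2.2.2 (i5.mpr q)⟩)
      (by
        intro a' b b' c c' d d' g1 g2 g3 g4 g5 g6 g7 g8 g9 g10 g11 g12 g13 g14 g15 g16 g17
          g18 g19 g20 g21 g22 g23 g24 g25 g26 g27 g28 hQ
        obtain ⟨q1, q2, q3, q4, q5, q6⟩ := hQ
        exact NFAux.LPaw a' g1 b g2 g3 b' g4 g5 g6 q1 c g7 g8 g9 g10 c' g11 g12 g13 g14 g15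
          q2 q3 d g16 g17 g18 g19 g20 g21 d' g22 g23 g24 g25 g26 g27 g28 q4 q5 q6)
      a b c d m1.ne m2.ne (fun e => n2 (by rw [← e]; exact m1.symm))
      m3.ne (fun e => n1 (by rw [← e]; exact m1)) m4.ne
      ⟨m1, m2, m3, m4, n1, n2⟩)
end

section
/- Let τ be a chord diagram of order n ≥ 1 and let τ' be the chord diagram of order n − 1 obtained from τ by deleting one chord (restricting τ to the remaining 2(n−1) endpoints and renumbering by the cyclic-order-preserving bijection onto ZMod (2(n−1))). Then F(τ') = F(τ) + 1 or F(τ') = F(τ) − 1; consequently (n − 1) + 1 − F(τ') ≤ n + 1 − F(τ). -/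
open Equiv Equiv.Perm MulAction Subgroup

section PermCount

variable {α : Type*} [Fintype α] [DecidableEq α]
set_option linter.unusedSectionVars false

noncomputable def permOrbits (σ : Perm α) : ℕ :=
  Nat.card (Quotient (orbitRel (zpowers σ) α))

lemma orbitRel_zpowers_iff (σ : Perm α) (x y : α) :
    (orbitRel (zpowers σ) α).r x y ↔ σ.SameCycle y x := by
  constructor
  · rintro ⟨⟨g, hg⟩, rfl⟩
    obtain ⟨k, rfl⟩ := Subgroup.mem_zpowers_iff.mp hg
    exact ⟨k, rfl⟩
  · rintro ⟨k, hk⟩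
    exact ⟨⟨σ ^ k, Subgroup.mem_zpowers_iff.mpr ⟨k, rfl⟩⟩, hk⟩

lemma sameCycle_of_nat_pow {σ : Perm α} {x y : α} {k : ℕ} (h : (σ ^ k) x = y) :
    σ.SameCycle x y := ⟨(k : ℤ), by rw [zpow_natCast]; exact h⟩

lemma sameCycle_exists_nat_pow {σ : Perm α} {x y : α} (h : σ.SameCycle x y) :
    ∃ k : ℕ, (σ ^ k) x = y := by
  obtain ⟨i, _, hi⟩ := h.exists_pow_eq'
  exact ⟨i, hi⟩

/-- trajectory avoidance: `(σ * swap a b)^k x = σ^k x` if trajectory avoids `a,b`. -/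
lemma mulswap_pow_eq (σ : Perm α) (a b x : α) (k : ℕ)
    (h : ∀ i, i < k → (σ ^ i) x ≠ a ∧ (σ ^ i) x ≠ b) :
    ((σ * Equiv.swap a b) ^ k) x = (σ ^ k) x := by
  induction k with
  | zero => simp
  | succ k ih =>
    have hk : ∀ i, i < k → (σ ^ i) x ≠ a ∧ (σ ^ i) x ≠ b := fun i hi => h i (by omega)
    obtain ⟨h1, h2⟩ := h k (by omega)
    rw [pow_succ', pow_succ', Perm.mul_apply, Perm.mul_apply, ih hk, Perm.mul_apply,
      Equiv.swap_apply_of_ne_of_ne h1 h2]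

/-- chain starting at `a` follows the `σ`-orbit of `σ b`. -/
lemma mulswap_pow_chain (σ : Perm α) (a b : α) (k : ℕ)
    (h : ∀ i, i < k → (σ ^ i) (σ b) ≠ a ∧ (σ ^ i) (σ b) ≠ b) :
    ((σ * Equiv.swap a b) ^ (k + 1)) a = (σ ^ k) (σ b) := by
  induction k with
  | zero => simp [Perm.mul_apply]
  | succ k ih =>
    have hk : ∀ i, i < k → (σ ^ i) (σ b) ≠ a ∧ (σ ^ i) (σ b) ≠ b := fun i hi => h i (by omega)
    obtain ⟨h1, h2⟩ := h k (by omega)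
    rw [pow_succ', Perm.mul_apply, ih hk, Perm.mul_apply,
      Equiv.swap_apply_of_ne_of_ne h1 h2, ← Perm.mul_apply σ, ← pow_succ']

lemma mulswap_sameCycle_ab {σ : Perm α} {a b : α} (hab : a ≠ b) (h : ¬σ.SameCycle a b) :
    (σ * Equiv.swap a b).SameCycle a b := by
  have hex : ∃ k, 0 < k ∧ (σ ^ k) b = b :=
    ⟨orderOf σ, orderOf_pos σ, by rw [pow_orderOf_eq_one]; rfl⟩
  classical
  set p := Nat.find hex with hp
  obtain ⟨hp0, hpb⟩ : 0 < p ∧ (σ ^ p) b = b := Nat.find_spec hex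
  have key : ((σ * Equiv.swap a b) ^ ((p - 1) + 1)) a = (σ ^ (p - 1)) (σ b) := by
    apply mulswap_pow_chain
    intro i hi
    have hi' : (σ ^ i) (σ b) = (σ ^ (i + 1)) b := by
      rw [pow_succ, Perm.mul_apply]
    constructor
    · rw [hi']; intro hc
      exact h (sameCycle_of_nat_pow hc).symm
    · rw [hi']; intro hc
      exact Nat.find_min hex (m := i + 1) (by omega) ⟨by omega, hc⟩
  have : ((σ * Equiv.swap a b) ^ p) a = b := by
    have hp1 : p - 1 + 1 = p := by omega
    rw [hp1] at key
    rw [key, ← Perm.mul_apply, ← pow_succ, hp1]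
    exact hpb
  exact sameCycle_of_nat_pow this

lemma mulswap_sameCycle_b_of {σ : Perm α} {a b : α} (h : ¬σ.SameCycle a b)
    {x : α} (hx : σ.SameCycle a x) : (σ * Equiv.swap a b).SameCycle b x := by
  classical
  have hex : ∃ k : ℕ, (σ ^ k) a = x := sameCycle_exists_nat_pow hx
  set k := Nat.find hex with hkdef
  have hk : (σ ^ k) a = x := Nat.find_spec hex
  rcases Nat.eq_zero_or_pos k with hk0 | hk0
  · rw [hk0] at hk; simp at hk
    subst hk
    exact (mulswap_sameCycle_ab (by intro hab; subst hab; exact h (SameCycle.refl σ a)) h).symm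
  · have key : ((σ * Equiv.swap a b) ^ ((k - 1) + 1)) b = (σ ^ (k - 1)) (σ a) := by
      have := mulswap_pow_chain σ b a (k - 1) ?_
      · rw [Equiv.swap_comm] at this; exact this
      intro i hi
      have hi' : (σ ^ i) (σ a) = (σ ^ (i + 1)) a := by rw [pow_succ, Perm.mul_apply]
      constructor
      · rw [hi']; intro hc
        exact h (sameCycle_of_nat_pow hc)
      · rw [hi']; intro hc
        -- σ^(i+1) a = a with i+1 < k : then σ^(k-(i+1)) a = x, contradicting minimality
        have : (σ ^ (k - (i + 1))) a = x := by
          conv_lhs => rw [← hc, ← Perm.mul_apply, ← pow_add]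
          rw [Nat.sub_add_cancel (by omega)]
          exact hk
        exact absurd this (Nat.find_min hex (by omega))
    have : ((σ * Equiv.swap a b) ^ k) b = x := by
      have hk1 : k - 1 + 1 = k := by omega
      rw [hk1] at key
      rw [key, ← Perm.mul_apply, ← pow_succ, hk1]
      exact hk
    exact sameCycle_of_nat_pow this

lemma mulswap_sameCycle_a_of {σ : Perm α} {a b : α} (h : ¬σ.SameCycle a b)
    {x : α} (hx : σ.SameCycle b x) : (σ * Equiv.swap a b).SameCycle a x := by
  have := mulswap_sameCycle_b_of (σ := σ) (a := b) (b := a)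
    (fun hc => h hc.symm) hx
  rwa [Equiv.swap_comm] at this

lemma mulswap_sameCycle_of_sameCycle {σ : Perm α} {a b : α} (h : ¬σ.SameCycle a b)
    {x y : α} (hxy : σ.SameCycle x y) : (σ * Equiv.swap a b).SameCycle x y := by
  by_cases hxa : σ.SameCycle x a
  · exact ((mulswap_sameCycle_b_of h hxa.symm).symm.trans
      (mulswap_sameCycle_b_of h (hxy.symm.trans hxa).symm))
  by_cases hxb : σ.SameCycle x b
  · exact ((mulswap_sameCycle_a_of h hxb.symm).symm.trans
      (mulswap_sameCycle_a_of h (hxy.symm.trans hxb).symm))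
  · obtain ⟨k, hk⟩ := sameCycle_exists_nat_pow hxy
    refine sameCycle_of_nat_pow (k := k) ?_
    rw [mulswap_pow_eq σ a b x k ?_]
    · exact hk
    intro i _
    exact ⟨fun hc => hxa (sameCycle_of_nat_pow hc),
      fun hc => hxb (sameCycle_of_nat_pow hc)⟩

/-- Merge description of same-cycle relation for `σ * swap a b` when `a,b` in distinct cycles. -/
lemma mulswap_sameCycle_iff {σ : Perm α} {a b : α} (hab : a ≠ b) (h : ¬σ.SameCycle a b)
    (x y : α) : (σ * Equiv.swap a b).SameCycle x y ↔
      (σ.SameCycle x y ∨ (σ.SameCycle x a ∧ σ.SameCycle y b) ∨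
        (σ.SameCycle x b ∧ σ.SameCycle y a)) := by
  constructor
  · intro hxy
    have main : ∀ k : ℕ, (σ.SameCycle x (((σ * Equiv.swap a b) ^ k) x) ∨
        (σ.SameCycle x a ∧ σ.SameCycle (((σ * Equiv.swap a b) ^ k) x) b) ∨
        (σ.SameCycle x b ∧ σ.SameCycle (((σ * Equiv.swap a b) ^ k) x) a)) := by
      intro k
      induction k with
      | zero => exact Or.inl (by simpa using SameCycle.refl σ x)
      | succ k ih =>
        set z := ((σ * Equiv.swap a b) ^ k) x with hz
        have hstep : (σ.SameCycle z ((σ * Equiv.swap a b) z) ∨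
            (σ.SameCycle z a ∧ σ.SameCycle ((σ * Equiv.swap a b) z) b) ∨
            (σ.SameCycle z b ∧ σ.SameCycle ((σ * Equiv.swap a b) z) a)) := by
          by_cases hza : z = a
          · right; left
            refine ⟨by rw [hza], ?_⟩
            rw [hza, Perm.mul_apply, Equiv.swap_apply_left]
            exact ⟨-1, by simp⟩
          by_cases hzb : z = b
          · right; right
            refine ⟨by rw [hzb], ?_⟩
            rw [hzb, Perm.mul_apply, Equiv.swap_apply_right]
            exact ⟨-1, by simp⟩
          · left
            rw [Perm.mul_apply, Equiv.swap_apply_of_ne_of_ne hza hzb]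
            exact ⟨1, by simp⟩
        rw [pow_succ', Perm.mul_apply, ← hz]
        rcases ih with h1 | ⟨h1, h2⟩ | ⟨h1, h2⟩ <;>
          rcases hstep with g1 | ⟨g1, g2⟩ | ⟨g1, g2⟩
        · exact Or.inl (h1.trans g1)
        · exact Or.inr (Or.inl ⟨h1.trans g1, g2⟩)
        · exact Or.inr (Or.inr ⟨h1.trans g1, g2⟩)
        · exact Or.inr (Or.inl ⟨h1, g1.symm.trans h2⟩)
        · exact absurd (g1.symm.trans h2) h
        · exact Or.inl (h1.trans g2.symm)
        · exact Or.inr (Or.inr ⟨h1, g1.symm.trans h2⟩)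
        · exact Or.inl (h1.trans g2.symm)
        · exact absurd (h2.symm.trans g1) h
    obtain ⟨k, hk⟩ := sameCycle_exists_nat_pow hxy
    rw [← hk]
    exact main k
  · rintro (hxy | ⟨h1, h2⟩ | ⟨h1, h2⟩)
    · exact mulswap_sameCycle_of_sameCycle h hxy
    · exact (mulswap_sameCycle_b_of h h1.symm).symm.trans
        ((mulswap_sameCycle_ab hab h).symm.trans (mulswap_sameCycle_a_of h h2.symm))
    · exact (mulswap_sameCycle_a_of h h1.symm).symm.trans
        ((mulswap_sameCycle_ab hab h).trans (mulswap_sameCycle_b_of h h2.symm))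

lemma mulswap_not_sameCycle {σ : Perm α} {a b : α} (hab : a ≠ b) (h : σ.SameCycle a b) :
    ¬(σ * Equiv.swap a b).SameCycle a b := by
  classical
  have hex : ∃ k : ℕ, 0 < k ∧ (σ ^ k) a = b := by
    obtain ⟨k, hk⟩ := sameCycle_exists_nat_pow h
    rcases Nat.eq_zero_or_pos k with h0 | h0
    · rw [h0] at hk; simp at hk; exact absurd hk hab
    · exact ⟨k, h0, hk⟩
  set k := Nat.find hex with hkdef
  obtain ⟨hk0, hk⟩ : 0 < k ∧ (σ ^ k) a = b := Nat.find_spec hex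
  set T : Set α := {x | x = b ∨ ∃ i, 0 < i ∧ i < k ∧ x = (σ ^ i) a} with hT
  have haT : a ∉ T := by
    rintro (rfl | ⟨i, hi0, hik, hia⟩)
    · exact hab rfl
    · have : (σ ^ (k - i)) a = b := by
        conv_lhs => rw [hia, ← Perm.mul_apply, ← pow_add]
        rw [Nat.sub_add_cancel hik.le]
        exact hk
      exact absurd ⟨by omega, this⟩ (Nat.find_min hex (by omega))
  have hbT : b ∈ T := Or.inl rfl
  have hinv : ∀ x ∈ T, (σ * Equiv.swap a b) x ∈ T := by
    rintro x (rfl | ⟨i, hi0, hik, rfl⟩)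
    · -- x = b
      rw [Perm.mul_apply, Equiv.swap_apply_right]
      rcases Nat.lt_or_ge 1 k with h1 | h1
      · exact Or.inr ⟨1, one_pos, h1, by simp⟩
      · have : k = 1 := by omega
        left
        rw [← hk, this, pow_one]
    · have hxa : (σ ^ i) a ≠ a := fun hc => haT (Or.inr ⟨i, hi0, hik, hc.symm⟩)
      have hxb : (σ ^ i) a ≠ b := fun hc => Nat.find_min hex hik ⟨hi0, hc⟩
      rw [Perm.mul_apply, Equiv.swap_apply_of_ne_of_ne hxa hxb, ← Perm.mul_apply, ← pow_succ']
      rcases Nat.lt_or_ge (i + 1) k with h1 | h1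
      · exact Or.inr ⟨i + 1, by omega, h1, by rw [pow_succ']⟩
      · have hik1 : i + 1 = k := by omega
        left
        rw [← hk, hik1]
  intro hcon
  obtain ⟨n, hn⟩ := sameCycle_exists_nat_pow hcon.symm
  have hmem : ∀ m : ℕ, ((σ * Equiv.swap a b) ^ m) b ∈ T := by
    intro m
    induction m with
    | zero => simpa using hbT
    | succ m ih =>
      rw [pow_succ', Perm.mul_apply]
      exact hinv _ ih
  have := hmem n
  rw [hn] at this
  exact haT this

lemma permOrbits_merge {σ : Perm α} {a b : α} (hab : a ≠ b) (h : ¬σ.SameCycle a b) :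
    permOrbits σ = permOrbits (σ * Equiv.swap a b) + 1 := by
  classical
  set σ'' := σ * Equiv.swap a b with hσ''
  let s := orbitRel (zpowers σ) α
  let t := orbitRel (zpowers σ'') α
  have hs : ∀ x y, s.r x y ↔ σ.SameCycle y x := orbitRel_zpowers_iff σ
  have ht : ∀ x y, t.r x y ↔ σ''.SameCycle y x := orbitRel_zpowers_iff σ''
  have wd : ∀ x y, s.r x y →
      (if σ.SameCycle x b then (Sum.inr Unit.unit : Quotient t ⊕ Unit)
        else Sum.inl (Quotient.mk t x)) =
      (if σ.SameCycle y b then (Sum.inr Unit.unit : Quotient t ⊕ Unit)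
        else Sum.inl (Quotient.mk t y)) := by
    intro x y hxy
    have hxy' : σ.SameCycle x y := ((hs x y).mp hxy).symm
    by_cases hb : σ.SameCycle x b
    · rw [if_pos hb, if_pos (hxy'.symm.trans hb)]
    · have hyb : ¬σ.SameCycle y b := fun hc => hb (hxy'.trans hc)
      rw [if_neg hb, if_neg hyb]
      exact congrArg Sum.inl (Quotient.sound ((ht x y).mpr
        (mulswap_sameCycle_of_sameCycle h hxy').symm))
  let g : Quotient s → Quotient t ⊕ Unit := Quotient.lift _ wd
  have hg : Function.Bijective g := by
    constructor
    · refine fun q1 q2 => Quotient.inductionOn₂ q1 q2 ?_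
      intro x y hxy
      have hgx : g (Quotient.mk s x) = _ := rfl
      by_cases hxb : σ.SameCycle x b <;> by_cases hyb : σ.SameCycle y b <;>
        simp only [g, Quotient.lift_mk, if_pos, if_neg, hxb, hyb, if_true, if_false] at hxy
      · exact Quotient.sound ((hs x y).mpr (hyb.trans hxb.symm))
      · simp [hxb, hyb] at hxy
      · simp [hxb, hyb] at hxy
      · simp only [hxb, hyb, if_false, Sum.inl.injEq] at hxy
        have := (ht x y).mp (Quotient.exact hxy)
        rw [mulswap_sameCycle_iff hab h] at this
        rcases this with h1 | ⟨h1, h2⟩ | ⟨h1, h2⟩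
        · exact Quotient.sound ((hs x y).mpr h1)
        · exact absurd h2 hxb
        · exact absurd h1 hyb
    · rintro (q | u)
      · refine Quotient.inductionOn q ?_
        intro x
        by_cases hxb : σ.SameCycle x b
        · refine ⟨Quotient.mk s a, ?_⟩
          have h1 : g (Quotient.mk s a) = Sum.inl (Quotient.mk t a) := by
            simp only [g, Quotient.lift_mk, if_neg h]
          rw [h1]
          exact congrArg Sum.inl (Quotient.sound ((ht a x).mpr
            ((mulswap_sameCycle_a_of h hxb.symm).symm)))
        · exact ⟨Quotient.mk s x, by simp only [g, Quotient.lift_mk, if_neg hxb]⟩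
      · exact ⟨Quotient.mk s b, by simp only [g, Quotient.lift_mk, if_pos (SameCycle.refl σ b)]⟩
  have hcard := Nat.card_eq_of_bijective g hg
  rw [permOrbits, permOrbits]
  rw [hcard, Nat.card_sum]
  simp
  exact Fintype.card_congr' rfl

lemma permOrbits_mulswap (σ : Perm α) {a b : α} (hab : a ≠ b) :
    permOrbits (σ * Equiv.swap a b) = permOrbits σ + 1 ∨
      permOrbits (σ * Equiv.swap a b) + 1 = permOrbits σ := by
  by_cases h : σ.SameCycle a b
  · left
    have h2 : ¬(σ * Equiv.swap a b).SameCycle a b := mulswap_not_sameCycle hab h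
    have := permOrbits_merge hab h2
    rwa [mul_assoc, Equiv.swap_mul_self, mul_one] at this
  · exact Or.inr (permOrbits_merge hab h).symm

lemma permOrbits_eq_of_interleave {β : Type*} [Fintype β] (σ : Perm α) (ρ : Perm β)
    (f : β → α) (hf : Function.Injective f)
    (H1 : ∀ b, ∃ d : ℕ, 0 < d ∧ (σ ^ d) (f b) = f (ρ b) ∧
      ∀ l, 0 < l → l < d → (σ ^ l) (f b) ∉ Set.range f)
    (H2 : ∀ x : α, ∃ (k : ℕ) (b : β), (σ ^ k) x = f b) :
    permOrbits ρ = permOrbits σ := by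
  classical
  let s := orbitRel (zpowers σ) α
  let t := orbitRel (zpowers ρ) β
  have hs : ∀ x y, s.r x y ↔ σ.SameCycle y x := orbitRel_zpowers_iff σ
  have ht : ∀ x y, t.r x y ↔ ρ.SameCycle y x := orbitRel_zpowers_iff ρ
  have fwd : ∀ b, σ.SameCycle (f b) (f (ρ b)) := by
    intro b
    obtain ⟨d, _, hd, _⟩ := H1 b
    exact sameCycle_of_nat_pow hd
  have fwd2 : ∀ (k : ℕ) (b : β), σ.SameCycle (f b) (f ((ρ ^ k) b)) := by
    intro k
    induction k with
    | zero => intro b; simpa using SameCycle.refl σ (f b)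
    | succ k ih =>
      intro b
      have := (ih b).trans (fwd ((ρ ^ k) b))
      rwa [← Perm.mul_apply, ← pow_succ'] at this
  have back : ∀ k : ℕ, ∀ b b', (σ ^ k) (f b) = f b' → ρ.SameCycle b b' := by
    intro k
    induction k using Nat.strong_induction_on with
    | _ k ih =>
      intro b b' hk
      rcases Nat.eq_zero_or_pos k with rfl | hk0
      · simp only [pow_zero, Perm.one_apply] at hk
        cases hf hk
        exact SameCycle.refl ρ b
      obtain ⟨d, hd0, hd, hmin⟩ := H1 b
      rcases le_or_gt d k with hdk | hdk
      · have hrest : (σ ^ (k - d)) (f (ρ b)) = f b' := by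
          rw [← hd, ← Perm.mul_apply, ← pow_add, Nat.sub_add_cancel hdk]
          exact hk
        exact (sameCycle_of_nat_pow (k := 1) (by simp) : ρ.SameCycle b (ρ b)).trans
          (ih (k - d) (by omega) (ρ b) b' hrest)
      · exact absurd ⟨b', hk.symm⟩ (hmin k hk0 hdk)
  have wd : ∀ x y, t.r x y → Quotient.mk s (f x) = Quotient.mk s (f y) := by
    intro x y hxy
    obtain ⟨k, hk⟩ := sameCycle_exists_nat_pow ((ht x y).mp hxy)
    refine Quotient.sound ((hs (f x) (f y)).mpr ?_)
    have := fwd2 k y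
    rw [hk] at this
    exact this
  let g : Quotient t → Quotient s := Quotient.lift (fun b => Quotient.mk s (f b)) wd
  have hg : Function.Bijective g := by
    constructor
    · refine fun q1 q2 => Quotient.inductionOn₂ q1 q2 ?_
      intro x y hxy
      have hxy' : σ.SameCycle (f y) (f x) := (hs (f x) (f y)).mp (Quotient.exact hxy)
      obtain ⟨k, hk⟩ := sameCycle_exists_nat_pow hxy'
      exact Quotient.sound ((ht x y).mpr (back k y x hk))
    · intro q
      refine Quotient.inductionOn q ?_
      intro x
      obtain ⟨k, b, hk⟩ := H2 x
      refine ⟨Quotient.mk t b, Quotient.sound ((hs (f b) x).mpr (sameCycle_of_nat_pow hk))⟩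
  rw [permOrbits, permOrbits]
  exact Nat.card_eq_of_bijective g hg

end PermCount

section FinHelpers

lemma val_finRotate {m : ℕ} (x : Fin m) : (finRotate m x).val = (x.val + 1) % m := by
  cases m with
  | zero => exact x.elim0
  | succ k =>
    rw [finRotate_succ_apply, Fin.val_add, Fin.val_one', Nat.add_mod_mod]

lemma val_finRotate_pow {m : ℕ} (l : ℕ) (x : Fin m) :
    (((finRotate m) ^ l) x).val = (x.val + l) % m := by
  have hm : 0 < m := Fin.pos x
  induction l with
  | zero => simp [Nat.mod_eq_of_lt x.isLt]
  | succ l ih =>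
    rw [pow_succ', Equiv.Perm.mul_apply, val_finRotate, ih, Nat.mod_add_mod, Nat.add_assoc]

/-- cyclic distance from `u` to `v` -/
def cdist {m : ℕ} (u v : Fin m) : ℕ := (v.val + (m - u.val)) % m

lemma cyclicSbtw_iff {m : ℕ} (a b c : Fin m) :
    cyclicSbtw a b c ↔ 0 < cdist a b ∧ cdist a b < cdist a c := Iff.rfl

lemma cdist_lt {m : ℕ} (u v : Fin m) : cdist u v < m :=
  Nat.mod_lt _ (Fin.pos u)

lemma cdist_rot_pow {m : ℕ} (u : Fin m) (l : ℕ) :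
    cdist u (((finRotate m) ^ l) u) = l % m := by
  have hm : 0 < m := Fin.pos u
  have hu : u.val ≤ m := u.isLt.le
  rw [cdist, val_finRotate_pow, Nat.mod_add_mod]
  have : u.val + l + (m - u.val) = l + m := by omega
  rw [this, Nat.add_mod_right]

lemma rot_pow_cdist {m : ℕ} (u v : Fin m) : ((finRotate m) ^ (cdist u v)) u = v := by
  have hm : 0 < m := Fin.pos u
  apply Fin.ext
  rw [val_finRotate_pow, cdist, Nat.add_mod_mod]
  have : u.val + (v.val + (m - u.val)) = v.val + m := by have := u.isLt; omega
  rw [this, Nat.add_mod_right, Nat.mod_eq_of_lt v.isLt]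

lemma cdist_self {m : ℕ} (u : Fin m) : cdist u u = 0 := by
  have h := cdist_rot_pow u 0
  simpa using h

lemma cdist_eq_iff {m : ℕ} {u v : Fin m} {l : ℕ} (hl : l < m) :
    cdist u v = l ↔ v = ((finRotate m) ^ l) u := by
  constructor
  · intro h; rw [← h, rot_pow_cdist]
  · intro h; rw [h, cdist_rot_pow, Nat.mod_eq_of_lt hl]

lemma cdist_eq_zero_iff {m : ℕ} {u v : Fin m} : cdist u v = 0 ↔ u = v := by
  have hm : 0 < m := Fin.pos u
  rw [cdist_eq_iff hm]
  constructor
  · intro h; rw [h]; simp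
  · intro h; rw [← h]; simp

lemma finRotate_ne {m : ℕ} (hm : 2 ≤ m) (x : Fin m) : finRotate m x ≠ x := by
  intro hc
  have := congrArg Fin.val hc
  rw [val_finRotate] at this
  have hx := x.isLt
  rcases Nat.lt_or_ge (x.val + 1) m with h | h
  · rw [Nat.mod_eq_of_lt h] at this; omega
  · have : x.val = m - 1 := by omega
    have h2 : (x.val + 1) % m = 0 := by
      have : x.val + 1 = m := by omega
      simp [this]
    omega

end FinHelpers

section PermCountExtra
open Equiv Equiv.Perm MulAction Subgroup
variable {α : Type*} [Fintype α] [DecidableEq α]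

lemma permOrbits_one : permOrbits (1 : Perm α) = Nat.card α := by
  classical
  have wd : ∀ x y : α, (orbitRel (zpowers (1 : Perm α)) α).r x y → x = y := by
    intro x y hxy
    obtain ⟨k, hk⟩ := (orbitRel_zpowers_iff 1 x y).mp hxy
    rw [one_zpow] at hk
    exact (hk : y = x).symm
  let g : Quotient (orbitRel (zpowers (1 : Perm α)) α) → α := Quotient.lift id wd
  have hg : Function.Bijective g := by
    constructor
    · refine fun q1 q2 => Quotient.inductionOn₂ q1 q2 ?_
      intro x y hxy
      exact congrArg (Quotient.mk _) (hxy : x = y)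
    · intro x
      exact ⟨Quotient.mk _ x, rfl⟩
  exact Nat.card_eq_of_bijective g hg

end PermCountExtra

section MainLemma
open Equiv Equiv.Perm MulAction Subgroup ChordDiagram

lemma deleteChord_permOrbits (n : ℕ) (hn : 0 < n) (D : ChordDiagram (n + 1))
    (j : Fin (2 * (n + 1))) (D' : ChordDiagram n) (h : D.DeleteChord j D') :
    permOrbits D'.boundary = permOrbits D.boundary + 1 ∨
      permOrbits D'.boundary + 1 = permOrbits D.boundary := by
  classical
  obtain ⟨f, ⟨finj, fcyc⟩, hrange, hcomm⟩ := h
  set ω := finRotate (2 * (n + 1)) with hω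
  set ψ := D.boundary * Equiv.swap j (D.τ j) with hψdef
  have hab : j ≠ D.τ j := Ne.symm (D.fpf j)
  have hm4 : 4 ≤ 2 * (n + 1) := by omega
  have h2n : 2 ≤ 2 * n := by omega
  have hfS : ∀ i, f i ∉ ({j, D.τ j} : Set (Fin (2 * (n + 1)))) := by
    intro i hc
    have hmem : f i ∈ Set.range f := ⟨i, rfl⟩
    rw [hrange] at hmem
    exact hmem hc
  have hSf : ∀ x : Fin (2 * (n + 1)), x ∉ ({j, D.τ j} : Set _) → x ∈ Set.range f := by
    intro x hx; rw [hrange]; exact hx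
  have hboundary : ∀ x, D.boundary x = ω (D.τ x) := fun x => rfl
  have hψ_del : ∀ p ∈ ({j, D.τ j} : Set (Fin (2 * (n + 1)))), ψ p = ω p := by
    intro p hp
    simp only [Set.mem_insert_iff, Set.mem_singleton_iff] at hp
    rcases hp with rfl | rfl
    · show D.boundary (Equiv.swap p (D.τ p) p) = ω p
      rw [Equiv.swap_apply_left, hboundary, D.invol]
    · show D.boundary (Equiv.swap j (D.τ j) (D.τ j)) = ω (D.τ j)
      rw [Equiv.swap_apply_right, hboundary]
  have hψ_f : ∀ i, ψ (f i) = ω (f (D'.τ i)) := by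
    intro i
    have h1 := hfS i
    simp only [Set.mem_insert_iff, Set.mem_singleton_iff, not_or] at h1
    show D.boundary (Equiv.swap j (D.τ j) (f i)) = _
    rw [Equiv.swap_apply_of_ne_of_ne h1.1 h1.2, hboundary, hcomm]
  -- successor lemma
  have succ_lem : ∀ x : Fin (2 * n), ∃ d, 0 < d ∧
      (ω ^ d) (f x) = f (finRotate (2 * n) x) ∧
      ∀ l, 0 < l → l < d → (ω ^ l) (f x) ∈ ({j, D.τ j} : Set _) := by
    intro x
    set v := f (finRotate (2 * n) x) with hv
    set d := cdist (f x) v with hd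
    have hxx : finRotate (2 * n) x ≠ x := finRotate_ne h2n x
    have hfv : v ≠ f x := fun hc => hxx (finj hc)
    have hdm : d < 2 * (n + 1) := cdist_lt _ _
    have hrot : (ω ^ d) (f x) = v := rot_pow_cdist _ _
    have hd0 : 0 < d := by
      rcases Nat.eq_zero_or_pos d with h0 | h0
      · exact absurd (cdist_eq_zero_iff.mp h0).symm hfv
      · exact h0
    refine ⟨d, hd0, hrot, ?_⟩
    intro l hl0 hld
    by_contra hmem
    obtain ⟨w, hw⟩ := hSf _ hmem
    have hlm : l < 2 * (n + 1) := by omega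
    have hcz : cdist (f x) (f w) = l := by
      rw [hw]; rw [cdist_rot_pow, Nat.mod_eq_of_lt hlm]
    have hwx : w ≠ x := by
      intro hc; subst hc
      rw [cdist_self] at hcz; omega
    have hwx1 : w ≠ finRotate (2 * n) x := by
      intro hc
      rw [hc, ← hv, ← hd] at hcz
      omega
    have hbtw : cyclicSbtw x (finRotate (2 * n) x) w := by
      rw [cyclicSbtw_iff]
      have h1 : cdist x (finRotate (2 * n) x) = 1 := by
        have := cdist_rot_pow x 1
        rw [pow_one] at this
        rw [this, Nat.mod_eq_of_lt (by omega)]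
      have h2 : cdist x w ≠ 0 := fun hc => hwx (cdist_eq_zero_iff.mp hc).symm
      have h3 : cdist x w ≠ 1 := by
        intro hc
        apply hwx1
        have := (cdist_eq_iff (by omega : (1:ℕ) < 2*n)).mp hc
        rw [pow_one] at this
        exact this
      rw [h1]
      omega
    have hord := fcyc _ _ _ hbtw
    rw [cyclicSbtw_iff] at hord
    rw [← hv, ← hd] at hord
    rw [hcz] at hord
    omega
  -- interleaving hypotheses
  have H1 : ∀ i : Fin (2 * n), ∃ d : ℕ, 0 < d ∧ (ψ ^ d) (f i) = f (D'.boundary i) ∧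
      ∀ l, 0 < l → l < d → (ψ ^ l) (f i) ∉ Set.range f := by
    intro i
    obtain ⟨d, hd0, hrot, hmid⟩ := succ_lem (D'.τ i)
    have key : ∀ l, 0 < l → l ≤ d → (ψ ^ l) (f i) = (ω ^ l) (f (D'.τ i)) := by
      intro l
      induction l with
      | zero => omega
      | succ l ih =>
        intro _ hld
        rcases Nat.eq_zero_or_pos l with rfl | hl0
        · rw [pow_one, pow_one, hψ_f]
        · rw [pow_succ', Equiv.Perm.mul_apply, ih hl0 (by omega),
            hψ_del _ (hmid l hl0 (by omega)), ← Equiv.Perm.mul_apply, ← pow_succ']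
    refine ⟨d, hd0, ?_, ?_⟩
    · rw [key d hd0 le_rfl, hrot]
      rfl
    · intro l hl0 hld
      rw [key l hl0 hld.le, hrange]
      simp only [Set.mem_compl_iff, not_not]
      exact hmid l hl0 hld
  have H2 : ∀ y : Fin (2 * (n + 1)), ∃ (k : ℕ) (b : Fin (2 * n)), (ψ ^ k) y = f b := by
    intro y
    by_cases hy : y ∈ ({j, D.τ j} : Set (Fin (2 * (n + 1))))
    · have hy1 : ψ y = ω y := hψ_del y hy
      by_cases hy2 : ω y ∈ ({j, D.τ j} : Set (Fin (2 * (n + 1))))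
      · -- two deleted points are y, ω y ; then ω (ω y) survives
        have hne : ω y ≠ y := finRotate_ne (by omega) y
        have c0 : cdist y y = 0 := cdist_self y
        have c1 : cdist y (ω y) = 1 := by
          have := cdist_rot_pow y 1
          rw [pow_one] at this
          rw [this, Nat.mod_eq_of_lt (by omega)]
        have c2 : cdist y ((ω ^ 2) y) = 2 := by
          rw [cdist_rot_pow, Nat.mod_eq_of_lt (by omega)]
        have hz1 : (ω ^ 2) y ≠ y := by
          intro hc; rw [hc] at c2; omega
        have hz2 : (ω ^ 2) y ≠ ω y := by
          intro hc; rw [hc] at c2; omega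
        have hz : (ω ^ 2) y ∉ ({j, D.τ j} : Set (Fin (2 * (n + 1)))) := by
          simp only [Set.mem_insert_iff, Set.mem_singleton_iff] at hy hy2 ⊢
          push_neg
          rcases hy with rfl | hyy
          · rcases hy2 with hww | hww
            · exact absurd hww hne
            · exact ⟨hz1, fun hc => hz2 (hc.trans hww.symm)⟩
          · subst hyy
            rcases hy2 with hww | hww
            · exact ⟨fun hc => hz2 (hc.trans hww.symm), hz1⟩
            · exact absurd hww hne
        obtain ⟨b, hb⟩ := hSf _ hz
        refine ⟨2, b, ?_⟩
        have hψ2 : (ψ ^ 2) y = (ω ^ 2) y := by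
          rw [sq, Equiv.Perm.mul_apply, hy1, hψ_del _ hy2, ← Equiv.Perm.mul_apply, ← sq]
        rw [hψ2, ← hb]
      · obtain ⟨b, hb⟩ := hSf _ hy2
        exact ⟨1, b, by rw [pow_one, hy1, ← hb]⟩
    · obtain ⟨b, hb⟩ := hSf _ hy
      exact ⟨0, b, by simp [← hb]⟩
  have e1 : permOrbits (D'.boundary) = permOrbits ψ :=
    permOrbits_eq_of_interleave ψ D'.boundary f finj H1 H2
  have e2 := permOrbits_mulswap D.boundary hab
  rw [← hψdef] at e2
  rw [e1]
  exact e2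

end MainLemma

/-- Deleting one chord from a chord diagram of order `n + 1` changes the number of boundary
components by exactly one: `F(D') = F(D) + 1` or `F(D') = F(D) - 1`. Consequently
`(n + 1 - 1) + 1 - F(D') ≤ (n + 1) + 1 - F(D)`. -/
theorem deleteChord_boundary_components (n : ℕ) (D : ChordDiagram (n + 1))
    (j : Fin (2 * (n + 1))) (D' : ChordDiagram n) (h : D.DeleteChord j D') :
    (D'.F = D.F + 1 ∨ D'.F + 1 = D.F) ∧
    (n : ℤ) + 1 - (D'.F : ℤ) ≤ ((n : ℤ) + 1) + 1 - (D.F : ℤ) := by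
  have main : D'.F = D.F + 1 ∨ D'.F + 1 = D.F := by
    rcases Nat.eq_zero_or_pos n with rfl | hn
    · right
      have hF' : D'.F = 1 := by simp [ChordDiagram.F]
      have hb1 : D.boundary = 1 := by
        apply Equiv.ext
        intro x
        have hval : (D.τ x).val ≠ x.val := fun hc => D.fpf x (Fin.ext hc)
        have h1 : (D.τ x).val < 2 * (0 + 1) := (D.τ x).isLt
        have h2 : x.val < 2 * (0 + 1) := x.isLt
        show finRotate (2 * (0 + 1)) (D.τ x) = x
        apply Fin.ext
        rw [val_finRotate]
        omega
      have hF : D.F = 2 := by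
        have hFp : D.F = permOrbits D.boundary := by
          simp only [ChordDiagram.F]
          rw [if_neg (by omega : ¬(0 + 1 = 0))]
          rfl
        rw [hFp, hb1, permOrbits_one, Nat.card_eq_fintype_card, Fintype.card_fin]
      rw [hF', hF]
    · have hD' : D'.F = permOrbits D'.boundary := by
        simp only [ChordDiagram.F]
        rw [if_neg (by omega : ¬(n = 0))]
        rfl
      have hD : D.F = permOrbits D.boundary := by
        simp only [ChordDiagram.F]
        rw [if_neg (by omega : ¬(n + 1 = 0))]
        rfl
      rw [hD', hD]
      exact deleteChord_permOrbits n hn D j D' h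
  refine ⟨main, ?_⟩
  rcases main with h1 | h1 <;> omega
end

section
/- Let τ be a chord diagram of order n ≥ 1 and let τ' (of order n − 1) be obtained from τ by reduction operation (α), i.e. by deleting an isolated chord {i, i+1} with τ(i) = i + 1 and renumbering. Then F(τ') = F(τ) − 1, and hence (n − 1) + 1 − F(τ') = n + 1 − F(τ); in particular operation (α) preserves realizability on the torus. -/
namespace StepAlphaProof

open Equiv MulAction

lemma finRotate_apply {m : ℕ} [NeZero m] (i : Fin m) : finRotate m i = i + 1 := by
  obtain ⟨k, rfl⟩ := Nat.exists_eq_succ_of_ne_zero (NeZero.ne m)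
  exact finRotate_succ_apply i

lemma rel_iff {α : Type*} (σ : Equiv.Perm α) (x y : α) :
    MulAction.orbitRel (Subgroup.zpowers σ) α x y ↔ σ.SameCycle y x := by
  rw [MulAction.orbitRel_apply, MulAction.mem_orbit_iff]
  constructor
  · rintro ⟨⟨g, k, rfl⟩, hg⟩
    exact ⟨k, hg⟩
  · rintro ⟨k, hk⟩
    exact ⟨⟨σ ^ k, k, rfl⟩, hk⟩

lemma sub_val {m : ℕ} [NeZero m] (a b : Fin m) :
    (b - a).val = (b.val + (m - a.val)) % m := by
  rw [Fin.sub_def]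
  simp [Nat.add_comm]

lemma cyclicSbtw_iff {m : ℕ} [NeZero m] (a b c : Fin m) :
    cyclicSbtw a b c ↔ 0 < (b - a).val ∧ (b - a).val < (c - a).val := by
  rw [cyclicSbtw, sub_val, sub_val]

lemma pow_fixed {α : Type*} (σ : Equiv.Perm α) (x : α) (h : σ x = x) (k : ℕ) :
    (σ ^ k) x = x := by
  induction k with
  | zero => simp
  | succ k ih => rw [pow_succ', Equiv.Perm.mul_apply, ih, h]

lemma samecycle_of_natpow {α : Type*} [Finite α] (σ : Equiv.Perm α) {x y : α}
    (h : σ.SameCycle x y) : ∃ k : ℕ, (σ ^ k) x = y := by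
  obtain ⟨k, _, hk⟩ := h.exists_pow_eq'
  exact ⟨k, hk⟩

end StepAlphaProof

namespace StepAlphaProof

lemma card_orbits (n : ℕ) (hn : 1 ≤ n) (D : ChordDiagram (n+1)) (D' : ChordDiagram n)
    (j : Fin (2*(n+1))) (hj : D.τ j = j + 1)
    (f : Fin (2*n) → Fin (2*(n+1))) (hinj : Function.Injective f)
    (hcyc : ∀ a b c, cyclicSbtw a b c → cyclicSbtw (f a) (f b) (f c))
    (hrange : Set.range f = ({j, D.τ j} : Set (Fin (2*(n+1))))ᶜ)
    (hcomm : ∀ i, D.τ (f i) = f (D'.τ i)) :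
    Nat.card (Quotient (MulAction.orbitRel (Subgroup.zpowers D.boundary) (Fin (2*(n+1))))) =
    Nat.card (Quotient (MulAction.orbitRel (Subgroup.zpowers D'.boundary) (Fin (2*n)))) + 1 := by
  haveI : NeZero (2*(n+1)) := ⟨by omega⟩
  haveI : NeZero (2*n) := ⟨by omega⟩
  haveI : Nonempty (Fin (2*n)) := ⟨⟨0, by omega⟩⟩
  have hm4 : 4 ≤ 2*(n+1) := by omega
  -- basic val computations
  have h1v : (1 : Fin (2*(n+1))).val = 1 := by
    rw [Fin.val_one', Nat.mod_eq_of_lt (by omega)]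
  have h1v' : (1 : Fin (2*n)).val = 1 := by
    rw [Fin.val_one', Nat.mod_eq_of_lt (by omega)]
  have h2v : (1 + 1 : Fin (2*(n+1))).val = 2 := by
    rw [Fin.val_add, h1v, Nat.mod_eq_of_lt (by omega)]
  have h3v : (1 + 1 + 1 : Fin (2*(n+1))).val = 3 := by
    rw [Fin.val_add, h2v, h1v, Nat.mod_eq_of_lt (by omega)]
  have h30 : (1 + 1 + 1 : Fin (2*(n+1))) ≠ 0 := by
    intro hco; have := congrArg Fin.val hco; rw [h3v, Fin.val_zero] at this; omega
  have h10 : (1 : Fin (2*(n+1))) ≠ 0 := by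
    intro hco; have := congrArg Fin.val hco; rw [h1v, Fin.val_zero] at this; omega
  have h20 : (1 + 1 : Fin (2*(n+1))) ≠ 0 := by
    intro hco; have := congrArg Fin.val hco; rw [h2v, Fin.val_zero] at this; omega
  have h10' : (1 : Fin (2*n)) ≠ 0 := by
    intro hco; have := congrArg Fin.val hco; rw [h1v', Fin.val_zero] at this; omega
  -- boundary formulas
  have hφ : ∀ x, D.boundary x = D.τ x + 1 := by
    intro x; simp [ChordDiagram.boundary, finRotate_apply]
  have hφ' : ∀ x, D'.boundary x = D'.τ x + 1 := by
    intro x; simp [ChordDiagram.boundary, finRotate_apply]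
  have hτj1 : D.τ (j + 1) = j := by
    have h := D.invol j; rwa [hj] at h
  rw [hj] at hrange
  have hfne : ∀ i, f i ≠ j ∧ f i ≠ j + 1 := by
    intro i
    have h : f i ∈ Set.range f := ⟨i, rfl⟩
    rw [hrange] at h
    simp only [Set.mem_compl_iff, Set.mem_insert_iff, Set.mem_singleton_iff] at h
    push_neg at h
    exact h
  have hmem : ∀ x : Fin (2*(n+1)), x ≠ j → x ≠ j + 1 → ∃ i, f i = x := by
    intro x hx1 hx2
    have h : x ∈ Set.range f := by
      rw [hrange]
      simp only [Set.mem_compl_iff, Set.mem_insert_iff, Set.mem_singleton_iff]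
      tauto
    exact h
  -- distinctness
  have hne1 : j + 1 ≠ j := fun hco => h10 (by
    have : j + 1 = j + 0 := by rw [hco, add_zero]
    exact add_left_cancel this)
  have hne2 : j + 1 + 1 ≠ j := fun hco => h20 (by
    have : j + (1 + 1) = j + 0 := by rw [← add_assoc, hco, add_zero]
    exact add_left_cancel this)
  have hne3 : j + 1 + 1 ≠ j + 1 := fun hco => h10 (by
    have : (j + 1) + 1 = (j + 1) + 0 := by rw [hco, add_zero]
    exact add_left_cancel this)
  -- the successor lemma
  have hS : ∀ a : Fin (2*n), f (a + 1) = if f a + 1 = j then j + 1 + 1 else f a + 1 := by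
    intro a
    set y := if f a + 1 = j then j + 1 + 1 else f a + 1 with hy
    have hymem : y ≠ j ∧ y ≠ j + 1 := by
      rw [hy]; split_ifs with hc
      · exact ⟨hne2, hne3⟩
      · constructor
        · intro hco; exact (by rw [hco] at hc; exact hc rfl : False)
        · intro hco
          exact (hfne a).1 (add_right_cancel hco)
    obtain ⟨b, hb⟩ := hmem y hymem.1 hymem.2
    have hba : b ≠ a := by
      intro hco; rw [hco] at hb
      rw [hy] at hb
      split_ifs at hb with hc
      · rw [← hc] at hb
        have h0 : f a + (1 + 1 + 1) = f a + 0 := by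
          rw [add_zero, ← add_assoc, ← add_assoc, ← hb]
        exact h30 (add_left_cancel h0)
      · have h0 : f a + 1 = f a + 0 := by rw [add_zero, ← hb]
        exact h10 (add_left_cancel h0)
    by_cases hb1 : b = a + 1
    · rw [← hb1, hb]
    · exfalso
      have hbtw : cyclicSbtw a (a + 1) b := by
        rw [cyclicSbtw_iff]
        have e1 : a + 1 - a = 1 := by abel
        rw [e1, h1v']
        refine ⟨by omega, ?_⟩
        have t0 : b - a ≠ 0 := fun hco => hba (by
          have : a + (b - a) = b := by abel
          rw [hco, add_zero] at this; exact this.symm)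
        have t1 : b - a ≠ 1 := fun hco => hb1 (by
          have : a + (b - a) = b := by abel
          rw [hco] at this; exact this.symm)
        have v0 : (b - a).val ≠ 0 := fun hco => t0 (Fin.ext (by rw [hco, Fin.val_zero]))
        have v1 : (b - a).val ≠ 1 := fun hco => t1 (Fin.ext (by rw [hco, h1v']))
        omega
      have hbtw2 := hcyc _ _ _ hbtw
      rw [hb, cyclicSbtw_iff] at hbtw2
      rw [hy] at hbtw2
      split_ifs at hbtw2 with hc
      · -- y = j + 1 + 1 = f a + 3
        have e3 : j + 1 + 1 - f a = 1 + 1 + 1 := by rw [← hc]; abel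
        rw [e3, h3v] at hbtw2
        have hzval : (f (a+1) - f a).val = 1 ∨ (f (a+1) - f a).val = 2 := by omega
        have hz : f a + (f (a+1) - f a) = f (a+1) := by abel
        rcases hzval with hv | hv
        · have : f (a+1) - f a = 1 := Fin.ext (by rw [hv, h1v])
          rw [this] at hz
          exact (hfne (a+1)).1 (by rw [← hz, hc])
        · have : f (a+1) - f a = 1 + 1 := Fin.ext (by rw [hv, h2v])
          rw [this] at hz
          have : f (a+1) = j + 1 := by
            rw [← hz, ← hc]; abel
          exact (hfne (a+1)).2 this
      · have e1 : f a + 1 - f a = 1 := by abel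
        rw [e1, h1v] at hbtw2
        omega
  -- up step
  have hstep : ∀ i, D.boundary.SameCycle (f i) (f (D'.boundary i)) := by
    intro i
    rw [hφ' i]
    rw [hS (D'.τ i)]
    split_ifs with hc
    · have e1 : D.boundary (f i) = j := by rw [hφ, hcomm, hc]
      have e2 : D.boundary j = j + 1 + 1 := by rw [hφ, hj]
      have : j + 1 + 1 = D.boundary (D.boundary (f i)) := by rw [e1, e2]
      rw [this]
      exact (Equiv.Perm.sameCycle_apply_right.mpr
        (Equiv.Perm.sameCycle_apply_right.mpr (Equiv.Perm.SameCycle.refl _ _)))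
    · have e1 : f (D'.τ i) + 1 = D.boundary (f i) := by rw [hφ, hcomm]
      rw [e1]
      exact Equiv.Perm.sameCycle_apply_right.mpr (Equiv.Perm.SameCycle.refl _ _)
  have hup : ∀ i i', D'.boundary.SameCycle i i' → D.boundary.SameCycle (f i) (f i') := by
    have key : ∀ (k : ℕ) (i), D.boundary.SameCycle (f i) (f ((D'.boundary ^ k) i)) := by
      intro k
      induction k with
      | zero =>
        intro i
        simp only [pow_zero, Equiv.Perm.one_apply]
        exact Equiv.Perm.SameCycle.refl _ _
      | succ k ih =>
        intro i
        have e : (D'.boundary ^ (k+1)) i = D'.boundary ((D'.boundary ^ k) i) := by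
          rw [pow_succ', Equiv.Perm.mul_apply]
        rw [e]
        exact (ih i).trans (hstep _)
    intro i i' h
    obtain ⟨k, hk⟩ := samecycle_of_natpow _ h
    rw [← hk]
    exact key k i
  -- descent
  set g := Function.invFun f with hg
  have hgf : ∀ i, g (f i) = i := fun i => Function.leftInverse_invFun hinj i
  set d : Fin (2*(n+1)) → Fin (2*n) :=
    fun x => g (if x = j then j + 1 + 1 else x) with hd
  have hdf : ∀ i, d (f i) = i := by
    intro i
    simp only [hd]
    rw [if_neg (hfne i).1, hgf]
  have hdesc : ∀ x, x ≠ j + 1 →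
      D.boundary x ≠ j + 1 ∧ D'.boundary.SameCycle (d x) (d (D.boundary x)) := by
    intro x hx
    constructor
    · intro hco
      rw [hφ] at hco
      have hτx : D.τ x = j := add_right_cancel hco
      have hx2 := D.invol x
      rw [hτx, hj] at hx2
      exact hx hx2.symm
    · by_cases hxj : x = j
      · subst hxj
        have e2 : D.boundary x = x + 1 + 1 := by rw [hφ, hj]
        rw [e2]
        have e4 : d (x + 1 + 1) = g (x + 1 + 1) := by
          simp only [hd]
          rw [if_neg hne2]
        have e5 : d x = g (x + 1 + 1) := by simp [hd]
        rw [e4, e5]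
      · obtain ⟨i, rfl⟩ := hmem x hxj hx
        rw [hdf]
        have e1 : D.boundary (f i) = f (D'.τ i) + 1 := by rw [hφ, hcomm]
        by_cases hc : f (D'.τ i) + 1 = j
        · have e2 : D.boundary (f i) = j := by rw [e1, hc]
          have e3 : f (D'.τ i + 1) = j + 1 + 1 := by rw [hS]; rw [if_pos hc]
          have : d (D.boundary (f i)) = D'.τ i + 1 := by
            rw [e2]
            have e6 : d j = g (j + 1 + 1) := by simp [hd]
            rw [e6, ← e3, hgf]
          rw [this, ← hφ']
          exact Equiv.Perm.sameCycle_apply_right.mpr (Equiv.Perm.SameCycle.refl _ _)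
        · have e3 : f (D'.τ i + 1) = f (D'.τ i) + 1 := by rw [hS]; rw [if_neg hc]
          have : d (D.boundary (f i)) = D'.τ i + 1 := by
            rw [e1, ← e3, hdf]
          rw [this, ← hφ']
          exact Equiv.Perm.sameCycle_apply_right.mpr (Equiv.Perm.SameCycle.refl _ _)
  have hdown : ∀ i i', D.boundary.SameCycle (f i) (f i') → D'.boundary.SameCycle i i' := by
    have key : ∀ (k : ℕ) (x), x ≠ j + 1 →
        (D.boundary ^ k) x ≠ j + 1 ∧ D'.boundary.SameCycle (d x) (d ((D.boundary ^ k) x)) := by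
      intro k
      induction k with
      | zero =>
        intro x hx
        refine ⟨by simpa using hx, ?_⟩
        simp only [pow_zero, Equiv.Perm.one_apply]
        exact Equiv.Perm.SameCycle.refl _ _
      | succ k ih =>
        intro x hx
        have e : (D.boundary ^ (k+1)) x = D.boundary ((D.boundary ^ k) x) := by
          rw [pow_succ', Equiv.Perm.mul_apply]
        obtain ⟨h1, h2⟩ := ih x hx
        obtain ⟨h3, h4⟩ := hdesc _ h1
        rw [e]
        exact ⟨h3, h2.trans h4⟩
    intro i i' h
    obtain ⟨k, hk⟩ := samecycle_of_natpow _ h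
    have := (key k (f i) (hfne i).2).2
    rw [hk, hdf, hdf] at this
    exact this
  -- the fixed point j + 1
  have hfix : ∀ x, D.boundary.SameCycle (j + 1) x → x = j + 1 := by
    have hfp : D.boundary (j + 1) = j + 1 := by rw [hφ, hτj1]
    intro x h
    obtain ⟨k, hk⟩ := samecycle_of_natpow _ h
    rw [pow_fixed _ _ hfp] at hk
    exact hk.symm
  -- assembly
  have hresp : ∀ i i', MulAction.orbitRel (Subgroup.zpowers D'.boundary) (Fin (2*n)) i i' →
      (Quotient.mk (MulAction.orbitRel (Subgroup.zpowers D.boundary) (Fin (2*(n+1)))) (f i)) =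
      (Quotient.mk (MulAction.orbitRel (Subgroup.zpowers D.boundary) (Fin (2*(n+1)))) (f i')) := by
    intro i i' hii
    apply Quotient.sound
    exact (rel_iff _ _ _).mpr (hup _ _ ((rel_iff _ _ _).mp hii))
  set F0 : Quotient (MulAction.orbitRel (Subgroup.zpowers D'.boundary) (Fin (2*n))) ⊕ Unit →
      Quotient (MulAction.orbitRel (Subgroup.zpowers D.boundary) (Fin (2*(n+1)))) :=
    Sum.elim (Quotient.lift (fun i => Quotient.mk _ (f i)) hresp)
      (fun _ => Quotient.mk _ (j + 1)) with hF0
  have hbij : Function.Bijective F0 := by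
    constructor
    · rintro (a | ⟨⟩) (b | ⟨⟩) hab
      · refine congrArg Sum.inl ?_
        revert hab
        refine Quotient.inductionOn₂ a b ?_
        intro i i' hab
        apply Quotient.sound
        have hS : MulAction.orbitRel (Subgroup.zpowers D.boundary) (Fin (2*(n+1))) (f i) (f i') :=
          Quotient.exact hab
        exact (rel_iff _ _ _).mpr (hdown _ _ ((rel_iff _ _ _).mp hS).symm).symm
      · exfalso
        revert hab
        refine Quotient.inductionOn a ?_
        intro i hab
        have hS : MulAction.orbitRel (Subgroup.zpowers D.boundary) (Fin (2*(n+1))) (f i) (j+1) :=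
          Quotient.exact hab
        exact (hfne i).2 (hfix _ ((rel_iff _ _ _).mp hS))
      · exfalso
        revert hab
        refine Quotient.inductionOn b ?_
        intro i hab
        have hS : MulAction.orbitRel (Subgroup.zpowers D.boundary) (Fin (2*(n+1))) (j+1) (f i) :=
          Quotient.exact hab
        exact (hfne i).2 (hfix _ ((rel_iff _ _ _).mp hS).symm)
      · rfl
    · intro q
      refine Quotient.inductionOn q ?_
      intro x
      by_cases hx1 : x = j + 1
      · exact ⟨Sum.inr ⟨⟩, by simp [hF0, hx1]⟩
      · by_cases hx2 : x = j
        · obtain ⟨i, hi⟩ := hmem (j + 1 + 1) hne2 hne3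
          refine ⟨Sum.inl (Quotient.mk _ i), ?_⟩
          simp only [hF0, Sum.elim_inl, Quotient.lift_mk]
          apply Quotient.sound
          refine (rel_iff _ _ _).mpr ?_
          rw [hx2, hi]
          have : j + 1 + 1 = D.boundary j := by rw [hφ, hj]
          rw [this]
          exact Equiv.Perm.sameCycle_apply_right.mpr (Equiv.Perm.SameCycle.refl _ _)
        · obtain ⟨i, hi⟩ := hmem x hx2 hx1
          exact ⟨Sum.inl (Quotient.mk _ i), by simp [hF0, hi]⟩
  have hcard := Nat.card_congr (Equiv.ofBijective F0 hbij)
  rw [← hcard, Nat.card_sum]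
  simp


lemma base_case (D : ChordDiagram (0+1)) (j : Fin (2*(0+1))) (hj : D.τ j = j + 1) :
    Nat.card (Quotient (MulAction.orbitRel (Subgroup.zpowers D.boundary)
      (Fin (2*(0+1))))) = 2 := by
  have hall : ∀ (u x : Fin 2), x = u ∨ x = u + 1 := by decide
  have htwo : ∀ (u : Fin 2), u + 1 + 1 = u := by decide
  haveI : NeZero (2*(0+1)) := ⟨by omega⟩
  have hτ1 : D.τ (j + 1) = j := by
    have h := D.invol j; rwa [hj] at h
  have hb1 : D.boundary = 1 := by
    apply Equiv.ext
    intro x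
    have hφ : D.boundary x = D.τ x + 1 := by simp [ChordDiagram.boundary, finRotate_apply]
    rcases hall j x with rfl | rfl
    · rw [Equiv.Perm.one_apply, hφ, hj, htwo]
    · rw [Equiv.Perm.one_apply, hφ, hτ1]
  have hbij : Function.Bijective
      (Quotient.mk (MulAction.orbitRel (Subgroup.zpowers D.boundary) (Fin (2*(0+1))))) := by
    constructor
    · intro a b hab
      have hS : MulAction.orbitRel (Subgroup.zpowers D.boundary) (Fin (2*(0+1))) a b :=
        Quotient.exact hab
      have := (rel_iff _ _ _).mp hS
      rw [hb1, Equiv.Perm.sameCycle_one] at this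
      exact this.symm
    · exact Quotient.mk_surjective
  rw [← Nat.card_congr (Equiv.ofBijective _ hbij)]
  simp

end StepAlphaProof


/-- If `D'` (of order `n`) is obtained from a chord diagram `D` of order `n + 1 ≥ 1` by
reduction operation (α) (deleting an isolated chord `{i, i+1}` with `τ i = i + 1` and
renumbering), then `F(D') = F(D) - 1`, hence `n + 1 - F(D') = (n + 1) + 1 - F(D)`;
in particular operation (α) preserves realizability on the torus. -/
theorem stepAlpha_boundary_components (n : ℕ) (D : ChordDiagram (n + 1))
    (D' : ChordDiagram n) (h : ChordDiagram.StepAlpha D D') :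
    D'.F + 1 = D.F ∧
    (n : ℤ) + 1 - (D'.F : ℤ) = ((n : ℤ) + 1) + 1 - (D.F : ℤ) ∧
    (((n : ℤ) + 1) + 1 - (D.F : ℤ) ≤ 2 ↔ (n : ℤ) + 1 - (D'.F : ℤ) ≤ 2) := by
  obtain ⟨j, hj, f, ⟨hinj, hcyc⟩, hrange, hcomm⟩ := h
  haveI : NeZero (2*(n+1)) := ⟨by omega⟩
  have hj' : D.τ j = j + 1 := by rw [hj, StepAlphaProof.finRotate_apply]
  suffices hkey : D'.F + 1 = D.F by
    exact ⟨hkey, by omega, by omega⟩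
  by_cases hn : n = 0
  · subst hn
    rw [ChordDiagram.F, ChordDiagram.F, if_pos rfl, if_neg (Nat.succ_ne_zero 0),
      StepAlphaProof.base_case D j hj']
  · have hn1 : 1 ≤ n := by omega
    have h1 := StepAlphaProof.card_orbits n hn1 D D' j hj' f hinj hcyc hrange hcomm
    rw [ChordDiagram.F, ChordDiagram.F, if_neg hn, if_neg (Nat.succ_ne_zero n)]
    omega
end

section
/- Let τ be a chord diagram of order n ≥ 2 and let τ' (of order n − 1) be obtained from τ by reduction operation (β), i.e. by deleting the chord {i+1, τ(i+1)} from a parallel pair (τ(i + 1) = τ(i) − 1 with the two chords distinct) and renumbering. Then F(τ') = F(τ) − 1, and hence (n − 1) + 1 − F(τ') = n + 1 − F(τ); in particular operation (β) preserves realizability on the torus. -/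
open Equiv Equiv.Perm MulAction

namespace CDAux

variable {α β : Type*}

abbrev QOrb (σ : Equiv.Perm α) := Quotient (MulAction.orbitRel (Subgroup.zpowers σ) α)

lemma qrel_iff (σ : Perm α) (x y : α) :
    MulAction.orbitRel (Subgroup.zpowers σ) α x y ↔ σ.SameCycle y x := by
  rw [MulAction.orbitRel_apply, MulAction.mem_orbit_iff]
  constructor
  · rintro ⟨⟨g, hg⟩, h⟩
    obtain ⟨k, rfl⟩ := Subgroup.mem_zpowers_iff.mp hg
    exact ⟨k, h⟩
  · rintro ⟨k, h⟩
    exact ⟨⟨σ ^ k, Subgroup.zpow_mem _ (Subgroup.mem_zpowers σ) k⟩, h⟩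

/-- make a class in the orbit quotient -/
abbrev qmk (σ : Perm α) (x : α) : QOrb σ := Quotient.mk (MulAction.orbitRel (Subgroup.zpowers σ) α) x

lemma qmk_eq_iff (σ : Perm α) (x y : α) : qmk σ x = qmk σ y ↔ σ.SameCycle x y := by
  constructor
  · intro h; exact ((qrel_iff σ x y).mp (Quotient.exact h)).symm
  · intro h; exact Quotient.sound ((qrel_iff σ x y).mpr h.symm)

lemma qsurj (σ : Perm α) : Function.Surjective (qmk σ) := by
  intro q; exact ⟨q.out, Quotient.out_eq q⟩

/-- a function invariant under one application of σ is constant on cycles -/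
lemma const_of_step [Finite α] {σ : Perm α} {P : α → β} (h : ∀ x, P (σ x) = P x)
    {x y : α} (hxy : σ.SameCycle x y) : P x = P y := by
  obtain ⟨k, _, hk⟩ := hxy.exists_pow_eq'
  subst hk
  clear * - h
  induction k with
  | zero => simp
  | succ k ih => rw [pow_succ', Perm.mul_apply, h]; exact ih

end CDAux

namespace CDAux

variable {α : Type*} [Finite α] [DecidableEq α]

/-- Merging lemma: multiplying by a swap with a fixed point merges orbits. -/
lemma merge_count (σ : Perm α) (a b : α) (hb : σ b = b) (hab : a ≠ b) :
    Nat.card (QOrb (σ * Equiv.swap a b)) + 1 = Nat.card (QOrb σ) := by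
  set σ' := σ * Equiv.swap a b with hσ'
  have hσ'a : σ' a = b := by simp [hσ', Perm.mul_apply, hb]
  have hσ'b : σ' b = σ a := by simp [hσ', Perm.mul_apply, Equiv.swap_apply_right]
  have hσ'other : ∀ x, x ≠ a → x ≠ b → σ' x = σ x := by
    intro x hxa hxb
    simp [hσ', Perm.mul_apply, Equiv.swap_apply_of_ne_of_ne hxa hxb]
  have hsc1 : σ'.SameCycle a b := ⟨1, by simpa using hσ'a⟩
  -- forward map data
  have wd_u : ∀ x y, σ.SameCycle x y →
      (if x = b then (Sum.inr () : QOrb σ' ⊕ Unit) else Sum.inl (qmk σ' x)) =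
      (if y = b then (Sum.inr () : QOrb σ' ⊕ Unit) else Sum.inl (qmk σ' y)) := by
    intro x y hxy
    refine const_of_step (σ := σ)
      (P := fun x => if x = b then (Sum.inr () : QOrb σ' ⊕ Unit) else Sum.inl (qmk σ' x))
      (fun x => ?_) hxy
    by_cases hxb : x = b
    · subst hxb; rw [hb]
    · have h1 : σ x ≠ b := fun hc => hxb (σ.injective (hc.trans hb.symm))
      rw [if_neg h1, if_neg hxb]
      congr 1
      rw [qmk_eq_iff]
      by_cases hxa : x = a
      · subst hxa
        refine Equiv.Perm.SameCycle.symm (x := x) (y := σ x) ⟨2, ?_⟩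
        have h2 : (σ' ^ (2:ℤ)) x = σ' (σ' x) := by
          rw [show ((2:ℤ)) = ((2:ℕ):ℤ) by norm_num, zpow_natCast, pow_succ, pow_one,
            Perm.mul_apply]
        rw [h2, hσ'a, hσ'b]
      · exact ⟨-1, by simp [← hσ'other x hxa hxb]⟩
  have wd_v : ∀ x y, σ'.SameCycle x y →
      (if x = b then qmk σ a else qmk σ x) = (if y = b then qmk σ a else qmk σ y) := by
    intro x y hxy
    refine const_of_step (σ := σ')
      (P := fun x => if x = b then qmk σ a else qmk σ x) (fun x => ?_) hxy
    by_cases hxb : x = b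
    · subst hxb
      rw [hσ'b, if_neg, if_pos rfl, qmk_eq_iff]
      · exact ⟨-1, by simp⟩
      · intro hc
        exact hab (σ.injective (by rw [hc, hb]))
    · by_cases hxa : x = a
      · subst hxa
        rw [hσ'a, if_pos rfl, if_neg hab]
      · rw [hσ'other x hxa hxb]
        have h1 : σ x ≠ b := fun hc => hxb (σ.injective (hc.trans hb.symm))
        rw [if_neg h1, if_neg hxb, qmk_eq_iff]
        exact ⟨-1, by simp⟩
  -- the equivalence
  have e : QOrb σ ≃ (QOrb σ' ⊕ Unit) := by
    refine
      { toFun := Quotient.lift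
          (fun x => if x = b then (Sum.inr () : QOrb σ' ⊕ Unit) else Sum.inl (qmk σ' x))
          (fun x y hr => wd_u x y (((qrel_iff σ x y).mp hr).symm))
        invFun := Sum.elim
          (Quotient.lift (fun x => if x = b then qmk σ a else qmk σ x)
            (fun x y hr => wd_v x y (((qrel_iff σ' x y).mp hr).symm)))
          (fun _ => qmk σ b)
        left_inv := ?_
        right_inv := ?_ }
    · intro q
      obtain ⟨x, rfl⟩ := qsurj σ q
      rw [Quotient.lift_mk]
      by_cases hxb : x = b
      · rw [if_pos hxb, Sum.elim_inr, hxb]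
      · rw [if_neg hxb, Sum.elim_inl, Quotient.lift_mk, if_neg hxb]
    · intro q
      rcases q with q | u
      · obtain ⟨x, rfl⟩ := qsurj σ' q
        rw [Sum.elim_inl, Quotient.lift_mk]
        by_cases hxb : x = b
        · rw [if_pos hxb, Quotient.lift_mk, if_neg hab, (qmk_eq_iff σ' a x).mpr, hxb]
          rw [hxb]; exact hsc1
        · rw [if_neg hxb, Quotient.lift_mk, if_neg hxb]
      · rw [Sum.elim_inr, Quotient.lift_mk, if_pos rfl]
  have := Nat.card_congr e
  rw [Nat.card_sum] at this
  simpa using this.symm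

end CDAux

namespace CDAux

variable {α β : Type*}

lemma sameCycle_of_pow {σ : Perm α} {x y : α} (k : ℕ) (h : (σ ^ k) x = y) :
    σ.SameCycle x y := ⟨k, by rw [zpow_natCast]; exact h⟩

/-- orbit count is invariant under conjugation by an equivalence -/
lemma conj_count [Finite α] (σ : Perm α) (ρ : Perm β) (e : α ≃ β)
    (h : ∀ x, e (σ x) = ρ (e x)) : Nat.card (QOrb σ) = Nat.card (QOrb ρ) := by
  have hFinβ : Finite β := Finite.of_equiv α e
  have hpow : ∀ (k : ℕ) (x : α), e ((σ ^ k) x) = (ρ ^ k) (e x) := by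
    intro k
    induction k with
    | zero => intro x; rfl
    | succ k ih => intro x; rw [pow_succ, pow_succ, Perm.mul_apply, Perm.mul_apply, ih, h]
  refine Nat.card_congr (Quotient.congr e ?_)
  intro x y
  rw [show (MulAction.orbitRel (Subgroup.zpowers σ) α).r x y ↔
      MulAction.orbitRel (Subgroup.zpowers σ) α x y from Iff.rfl]
  rw [qrel_iff, qrel_iff]
  constructor
  · intro hc
    obtain ⟨k, _, hk⟩ := hc.exists_pow_eq'
    exact sameCycle_of_pow k (by rw [← hpow, hk])
  · intro hc
    obtain ⟨k, _, hk⟩ := hc.exists_pow_eq'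
    refine sameCycle_of_pow k (e.injective ?_)
    rw [hpow, hk]

lemma one_count : Nat.card (QOrb (1 : Perm β)) = Nat.card β := by
  refine (Nat.card_congr ?_).symm
  refine { toFun := qmk 1, invFun := Quotient.lift id ?_, left_inv := ?_, right_inv := ?_ }
  · intro x y hr
    have := (qrel_iff (1 : Perm β) x y).mp hr
    obtain ⟨k, hk⟩ := this
    simpa using hk.symm
  · intro x; rfl
  · intro q; obtain ⟨x, rfl⟩ := qsurj _ q; rfl

lemma sum_count [Finite α] [Finite β] (σ : Perm α) (ρ : Perm β) :
    Nat.card (QOrb (Equiv.sumCongr σ ρ)) = Nat.card (QOrb σ) + Nat.card (QOrb ρ) := by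
  have hpow : ∀ (k : ℕ), (Equiv.sumCongr σ ρ) ^ k = Equiv.sumCongr (σ ^ k) (ρ ^ k) := by
    intro k
    induction k with
    | zero => simp [Equiv.Perm.sumCongr_one]
    | succ k ih => rw [pow_succ, ih, pow_succ, pow_succ, Equiv.Perm.sumCongr_mul]
  have hl : ∀ x y : α, Equiv.Perm.SameCycle (Equiv.sumCongr σ ρ) (Sum.inl x) (Sum.inl y) ↔
      σ.SameCycle x y := by
    intro x y
    constructor
    · intro hc
      obtain ⟨k, _, hk⟩ := hc.exists_pow_eq'
      rw [hpow] at hk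
      exact sameCycle_of_pow k (by simpa using hk)
    · intro hc
      obtain ⟨k, _, hk⟩ := hc.exists_pow_eq'
      exact sameCycle_of_pow k (by rw [hpow]; simp [hk])
  have hr : ∀ x y : β, Equiv.Perm.SameCycle (Equiv.sumCongr σ ρ) (Sum.inr x) (Sum.inr y) ↔
      ρ.SameCycle x y := by
    intro x y
    constructor
    · intro hc
      obtain ⟨k, _, hk⟩ := hc.exists_pow_eq'
      rw [hpow] at hk
      exact sameCycle_of_pow k (by simpa using hk)
    · intro hc
      obtain ⟨k, _, hk⟩ := hc.exists_pow_eq'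
      exact sameCycle_of_pow k (by rw [hpow]; simp [hk])
  have hlr : ∀ (x : α) (y : β), ¬ Equiv.Perm.SameCycle (Equiv.sumCongr σ ρ) (Sum.inl x) (Sum.inr y) := by
    intro x y hc
    obtain ⟨k, _, hk⟩ := hc.exists_pow_eq'
    rw [hpow] at hk
    simp at hk
  have e : QOrb (Equiv.sumCongr σ ρ) ≃ (QOrb σ ⊕ QOrb ρ) := by
    refine
      { toFun := Quotient.lift (Sum.elim (fun x => Sum.inl (qmk σ x)) (fun y => Sum.inr (qmk ρ y))) ?_
        invFun := Sum.elim
          (Quotient.lift (fun x => qmk (Equiv.sumCongr σ ρ) (Sum.inl x)) ?_)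
          (Quotient.lift (fun y => qmk (Equiv.sumCongr σ ρ) (Sum.inr y)) ?_)
        left_inv := ?_
        right_inv := ?_ }
    · rintro (x | x) (y | y) hr2 <;>
        have hc := ((qrel_iff _ _ _).mp hr2).symm
      · simp only [Sum.elim_inl, Sum.inl.injEq]
        exact (qmk_eq_iff _ _ _).mpr ((hl x y).mp hc)
      · exact absurd hc (hlr x y)
      · exact absurd hc.symm (hlr y x)
      · simp only [Sum.elim_inr, Sum.inr.injEq]
        exact (qmk_eq_iff _ _ _).mpr ((hr x y).mp hc)
    · intro x y hr2
      exact (qmk_eq_iff _ _ _).mpr ((hl x y).mpr ((qrel_iff _ _ _).mp hr2).symm)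
    · intro x y hr2
      exact (qmk_eq_iff _ _ _).mpr ((hr x y).mpr ((qrel_iff _ _ _).mp hr2).symm)
    · intro q
      obtain ⟨x, rfl⟩ := qsurj _ q
      rcases x with x | x <;> rfl
    · intro q
      rcases q with q | q
      · obtain ⟨x, rfl⟩ := qsurj _ q; rfl
      · obtain ⟨y, rfl⟩ := qsurj _ q; rfl
  rw [Nat.card_congr e, Nat.card_sum]

end CDAux

namespace CDAux

/-- cyclic distance -/
def dlt {m : ℕ} (a b : Fin m) : ℕ := (b.val + (m - a.val)) % m

lemma cyclicSbtw_iff {m : ℕ} (a b c : Fin m) :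
    cyclicSbtw a b c ↔ 0 < dlt a b ∧ dlt a b < dlt a c := Iff.rfl

lemma mod2 {m x : ℕ} (hm : 0 < m) (h : x < 2 * m) :
    x % m = if x < m then x else x - m := by
  split_ifs with h1
  · exact Nat.mod_eq_of_lt h1
  · rw [Nat.mod_eq_sub_mod (by omega)]
    exact Nat.mod_eq_of_lt (by omega)

lemma fin_pos {m : ℕ} (a : Fin m) : 0 < m := lt_of_le_of_lt (Nat.zero_le _) a.isLt

lemma dlt_lt {m : ℕ} (a b : Fin m) : dlt a b < m := Nat.mod_lt _ (fin_pos a)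

lemma dlt_eq_zero_iff {m : ℕ} (a b : Fin m) : dlt a b = 0 ↔ a = b := by
  have ha := a.isLt; have hb := b.isLt
  rw [dlt, Fin.ext_iff, mod2 (fin_pos a) (by omega)]
  split_ifs <;> omega

lemma dlt_inj {m : ℕ} (a b c : Fin m) (h : dlt a b = dlt a c) : b = c := by
  have ha := a.isLt; have hb := b.isLt; have hc := c.isLt
  rw [dlt, dlt, mod2 (fin_pos a) (by omega), mod2 (fin_pos a) (by omega)] at h
  rw [Fin.ext_iff]
  split_ifs at h <;> omega

/-- add a natural number to an element of `Fin m` -/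
def addv {m : ℕ} (x : Fin m) (t : ℕ) : Fin m :=
  ⟨(x.val + t) % m, Nat.mod_lt _ (fin_pos x)⟩

lemma addv_val {m : ℕ} (x : Fin m) (t : ℕ) : (addv x t).val = (x.val + t) % m := rfl

lemma dlt_addv {m : ℕ} (x : Fin m) {t : ℕ} (ht : t < m) : dlt x (addv x t) = t := by
  have hx := x.isLt
  have h1 : (x.val + t) % m = if x.val + t < m then x.val + t else x.val + t - m :=
    mod2 (fin_pos x) (by omega)
  rw [dlt, addv_val, h1]
  split_ifs with h2
  · rw [mod2 (fin_pos x) (by omega)]; split_ifs <;> omega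
  · rw [mod2 (fin_pos x) (by omega)]; split_ifs <;> omega

lemma addv_addv {m : ℕ} (x : Fin m) (s t : ℕ) : addv (addv x s) t = addv x (s + t) := by
  apply Fin.ext
  rw [addv_val, addv_val, addv_val, Nat.mod_add_mod, Nat.add_assoc]

lemma addv_two {m : ℕ} (x : Fin m) : addv x 2 = addv (addv x 1) 1 := by
  rw [addv_addv]

lemma addv_three {m : ℕ} (x : Fin m) : addv x 3 = addv (addv (addv x 1) 1) 1 := by
  rw [addv_addv, addv_addv]

lemma addv_ne {m : ℕ} (x : Fin m) {t : ℕ} (ht : 0 < t) (htm : t < m) : addv x t ≠ x := by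
  intro h
  have := dlt_addv x htm
  rw [h] at this
  rw [(dlt_eq_zero_iff x x).mpr rfl] at this
  omega

lemma finRotate_eq_addv {m : ℕ} (x : Fin (m + 1)) : finRotate (m + 1) x = addv x 1 := by
  apply Fin.ext
  rw [finRotate_succ_apply, addv_val, Fin.val_add, Fin.val_one',
    Nat.add_mod x.val 1, Nat.mod_eq_of_lt x.isLt]

lemma tri {m : ℕ} (a b c : Fin m) (hba : b ≠ a) (hbc : b ≠ c) (hca : c ≠ a) :
    cyclicSbtw a b c ∨ cyclicSbtw a c b := by
  have h1 : dlt a b ≠ 0 := fun h => hba ((dlt_eq_zero_iff a b).mp h ▸ rfl)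
  have h2 : dlt a c ≠ 0 := fun h => hca ((dlt_eq_zero_iff a c).mp h ▸ rfl)
  have h3 : dlt a b ≠ dlt a c := fun h => hbc (dlt_inj a b c h)
  rw [cyclicSbtw_iff, cyclicSbtw_iff]
  omega

section S

variable {M N : ℕ} {f : Fin M → Fin N} {d1 d2 : Fin N} (hM : 2 ≤ M)
  (hinj : Function.Injective f)
  (hord : ∀ a b c, cyclicSbtw a b c → cyclicSbtw (f a) (f b) (f c))
  (hrange : Set.range f = ({d1, d2} : Set (Fin N))ᶜ)

include hM hinj hord in
lemma noMiddle (k j : Fin M) : ¬ cyclicSbtw (f k) (f j) (f (addv k 1)) := by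
  intro hs
  rw [cyclicSbtw_iff] at hs
  have hjk : f j ≠ f k := by
    intro h
    rw [h, (dlt_eq_zero_iff (f k) (f k)).mpr rfl] at hs
    omega
  have hjk1 : f j ≠ f (addv k 1) := by
    intro h
    rw [h] at hs
    omega
  have hk1 : addv k 1 ≠ k := addv_ne k one_pos (by omega)
  have hdk1 : dlt k (addv k 1) = 1 := dlt_addv k (by omega)
  rcases tri k j (addv k 1) (fun h => hjk (congrArg f h)) (fun h => hjk1 (congrArg f h))
    hk1 with h | h
  · rw [cyclicSbtw_iff, hdk1] at h
    omega
  · have := hord _ _ _ h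
    rw [cyclicSbtw_iff] at this
    omega

include hM hinj hord hrange in
lemma succAt (k : Fin M) (t : ℕ) (ht : 0 < t) (htN : t < N)
    (hmid : ∀ s, 0 < s → s < t → addv (f k) s ∈ ({d1, d2} : Set (Fin N)))
    (hout : addv (f k) t ∉ ({d1, d2} : Set (Fin N))) :
    f (addv k 1) = addv (f k) t := by
  have hy : addv (f k) t ∈ Set.range f := by rw [hrange]; exact hout
  obtain ⟨j, hj⟩ := hy
  have hk1 : addv k 1 ≠ k := addv_ne k one_pos (by omega)
  have hne : f (addv k 1) ≠ f k := fun h => hk1 (hinj h)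
  have ht'0 : dlt (f k) (f (addv k 1)) ≠ 0 :=
    fun h => hne ((dlt_eq_zero_iff _ _).mp h ▸ rfl)
  have ht'N : dlt (f k) (f (addv k 1)) < N := dlt_lt _ _
  rcases lt_trichotomy (dlt (f k) (f (addv k 1))) t with hlt | heq | hgt
  · exfalso
    have he : f (addv k 1) = addv (f k) (dlt (f k) (f (addv k 1))) := by
      refine dlt_inj (f k) _ _ ?_
      rw [dlt_addv (f k) ht'N]
    have hmem := hmid _ (by omega) hlt
    rw [← he] at hmem
    have : f (addv k 1) ∈ Set.range f := ⟨addv k 1, rfl⟩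
    rw [hrange] at this
    exact this hmem
  · refine (dlt_inj (f k) _ _ ?_).symm
    rw [dlt_addv (f k) htN, heq]
  · exfalso
    refine noMiddle hM hinj hord k j ?_
    rw [cyclicSbtw_iff, hj, dlt_addv (f k) htN]
    exact ⟨ht, hgt⟩

end S

end CDAux

/-- If `D'` (of order `n + 1`) is obtained from a chord diagram `D` of order `n + 2 ≥ 2` by
reduction operation (β) (deleting the chord `{i+1, τ(i+1)}` from a parallel pair, i.e. with
`τ(i+1) = τ(i) - 1` and the two chords distinct, and renumbering), then `F(D') = F(D) - 1`,
hence `(n + 1) + 1 - F(D') = (n + 2) + 1 - F(D)`; in particular operation (β) preserves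
realizability on the torus. -/
theorem stepBeta_boundary_components (n : ℕ) (D : ChordDiagram (n + 2))
    (D' : ChordDiagram (n + 1)) (h : ChordDiagram.StepBeta D D') :
    D'.F + 1 = D.F ∧
    ((n : ℤ) + 1) + 1 - (D'.F : ℤ) = ((n : ℤ) + 2) + 1 - (D.F : ℤ) ∧
    (((n : ℤ) + 2) + 1 - (D.F : ℤ) ≤ 2 ↔ ((n : ℤ) + 1) + 1 - (D'.F : ℤ) ≤ 2) := by
  classical
  obtain ⟨i, hβ, h2, f, ⟨hinj, hord⟩, hrange, hcomm⟩ := h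
  have hN4 : 4 ≤ 2 * (n + 1 + 1) := by omega
  have hM2 : 2 ≤ 2 * (n + 1) := by omega
  have hrotN : ∀ x : Fin (2 * (n + 1 + 1)), finRotate (2 * (n + 1 + 1)) x = CDAux.addv x 1 :=
    fun x => CDAux.finRotate_eq_addv (m := 2 * n + 3) x
  have hrotM : ∀ x : Fin (2 * (n + 1)), finRotate (2 * (n + 1)) x = CDAux.addv x 1 :=
    fun x => CDAux.finRotate_eq_addv (m := 2 * n + 1) x
  set d1 : Fin (2 * (n + 1 + 1)) := finRotate (2 * (n + 1 + 1)) i with hd1def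
  set d2 : Fin (2 * (n + 1 + 1)) := D.τ d1 with hd2def
  set x1 : Fin (2 * (n + 1 + 1)) := D.τ i with hx1def
  have hd1 : d1 = CDAux.addv i 1 := hrotN i
  -- hβ : D.τ d1 = (finRotate _).symm x1
  have hx1 : CDAux.addv d2 1 = x1 := by
    rw [← hrotN, hβ]
    exact (finRotate _).apply_symm_apply x1
  set c : Fin (2 * (n + 1 + 1)) := (finRotate (2 * (n + 1 + 1))).symm d2 with hcdef
  have hc : CDAux.addv c 1 = d2 := by
    rw [← hrotN]; exact (finRotate _).apply_symm_apply d2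
  set a : Fin (2 * (n + 1 + 1)) := D.τ c with hadef
  have hτa : D.τ a = c := D.invol c
  have hτd2 : D.τ d2 = d1 := D.invol d1
  have hτx1 : D.τ x1 = i := D.invol i
  have haddne : ∀ x : Fin (2 * (n + 1 + 1)), CDAux.addv x 1 ≠ x :=
    fun x => CDAux.addv_ne x one_pos (by omega)
  have haddinj : ∀ x y : Fin (2 * (n + 1 + 1)), CDAux.addv x 1 = CDAux.addv y 1 → x = y := by
    intro x y hxy
    have := (finRotate (2 * (n + 1 + 1))).injective (a₁ := x) (a₂ := y)
    rw [hrotN, hrotN] at this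
    exact this hxy
  -- inequalities
  have hne_x1d1 : x1 ≠ d1 := h2
  have hne_x1d2 : x1 ≠ d2 := by rw [← hx1]; exact haddne d2
  have hne_d1d2 : d1 ≠ d2 := by
    intro hne
    exact D.fpf d1 (by rw [← hd2def, ← hne])
  have hne_ad1 : a ≠ d1 := by
    intro hne
    have hca : c = d2 := by rw [← hτa, hne, ← hd2def]
    rw [hca] at hc
    exact haddne d2 hc
  have hne_ax1 : a ≠ x1 := by
    intro hne
    have hca : c = i := by rw [← hτa, hne, hx1def, D.invol]
    rw [hca, ← hd1] at hc
    exact hne_d1d2 hc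
  -- membership
  have hmem : ∀ x : Fin (2 * (n + 1 + 1)), x ≠ d1 → x ≠ d2 → x ∈ Set.range f := by
    intro x hxd1 hxd2
    rw [hrange]
    simp only [Set.mem_compl_iff, Set.mem_insert_iff, Set.mem_singleton_iff]
    tauto
  have hnotin : ∀ k, f k ≠ d1 ∧ f k ≠ d2 := by
    intro k
    have : f k ∈ Set.range f := ⟨k, rfl⟩
    rw [hrange] at this
    simp only [Set.mem_compl_iff, Set.mem_insert_iff, Set.mem_singleton_iff] at this
    tauto
  -- the equivalence E
  set g : (Fin (2 * (n + 1)) ⊕ (Unit ⊕ Unit)) → Fin (2 * (n + 1 + 1)) :=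
    Sum.elim f (Sum.elim (fun _ => d1) (fun _ => d2)) with hgdef
  have hginj : Function.Injective g := by
    rintro (x | (u | u)) (y | (v | v)) hxy <;>
      simp only [hgdef, Sum.elim_inl, Sum.elim_inr] at hxy
    · rw [hinj hxy]
    · exact absurd hxy (hnotin x).1
    · exact absurd hxy (hnotin x).2
    · exact absurd hxy.symm (hnotin y).1
    · rfl
    · exact absurd hxy hne_d1d2
    · exact absurd hxy.symm (hnotin y).2
    · exact absurd hxy.symm hne_d1d2
    · rfl
  have hgbij : Function.Bijective g := by
    rw [Fintype.bijective_iff_injective_and_card]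
    exact ⟨hginj, by simp; omega⟩
  set E := Equiv.ofBijective g hgbij with hEdef
  have hEl : ∀ k, E (Sum.inl k) = f k := fun k => rfl
  have hEd1 : E (Sum.inr (Sum.inl ())) = d1 := rfl
  have hEd2 : E (Sum.inr (Sum.inr ())) = d2 := rfl
  set Sgp : Equiv.Perm (Fin (2 * (n + 1)) ⊕ (Unit ⊕ Unit)) :=
    Equiv.sumCongr D'.boundary (1 : Equiv.Perm (Unit ⊕ Unit)) with hSgdef
  set ψ : Equiv.Perm (Fin (2 * (n + 1 + 1))) := E.symm.trans (Sgp.trans E) with hψdef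
  have hψap : ∀ z, ψ (E z) = E (Sgp z) := by
    intro z
    rw [hψdef]
    simp [Equiv.trans_apply]
  have hψf : ∀ k, ψ (f k) = f (D'.boundary k) := by
    intro k
    rw [← hEl k, hψap]
    rw [show Sgp (Sum.inl k) = Sum.inl (D'.boundary k) from rfl]
    exact hEl _
  have hψd1 : ψ d1 = d1 := by
    rw [← hEd1, hψap]
    rfl
  have hψd2 : ψ d2 = d2 := by
    rw [← hEd2, hψap]
    rfl
  -- boundary unfolding
  have hbD : ∀ x, D.boundary x = CDAux.addv (D.τ x) 1 := by
    intro x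
    rw [ChordDiagram.boundary, Equiv.trans_apply, hrotN]
  have hbD' : ∀ k, D'.boundary k = CDAux.addv (D'.τ k) 1 := by
    intro k
    rw [ChordDiagram.boundary, Equiv.trans_apply, hrotM]
  -- successor computations
  have hψcompute : ∀ (k : Fin (2 * (n + 1))) (t : ℕ), 0 < t → t < 2 * (n + 1 + 1) →
      (∀ s, 0 < s → s < t → CDAux.addv (D.τ (f k)) s ∈ ({d1, d2} : Set (Fin (2 * (n + 1 + 1))))) →
      CDAux.addv (D.τ (f k)) t ∉ ({d1, d2} : Set (Fin (2 * (n + 1 + 1)))) →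
      ψ (f k) = CDAux.addv (D.τ (f k)) t := by
    intro k t ht htN hmid hout
    rw [hψf k, hbD' k]
    have hfk : f (D'.τ k) = D.τ (f k) := (hcomm k).symm
    rw [← hfk] at hmid hout ⊢
    exact CDAux.succAt hM2 hinj hord hrange (D'.τ k) t ht htN hmid hout
  obtain ⟨kx1, hkx1⟩ := hmem x1 hne_x1d1 hne_x1d2
  -- generic / special case split
  by_cases hsp : a = d2
  · -- SPECIAL CASE : d2 = addv d1 1
    have hcd1 : c = d1 := by rw [← hτa, hsp, hτd2]
    have hd2ad : CDAux.addv d1 1 = d2 := by rw [← hcd1]; exact hc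
    have key3 : CDAux.addv i 3 = x1 := by
      rw [CDAux.addv_three, ← hd1, hd2ad, hx1]
    have key2 : CDAux.addv i 2 = d2 := by
      rw [CDAux.addv_two, ← hd1, hd2ad]
    have hψx1 : ψ x1 = x1 := by
      have := hψcompute kx1 3 (by omega) (by omega) ?_ ?_
      · rw [hkx1, hτx1, key3] at this
        exact this
      · intro s hs1 hs2
        rw [hkx1, hτx1]
        interval_cases s
        · rw [← hd1]; exact Set.mem_insert _ _
        · rw [key2]
          exact Set.mem_insert_iff.mpr (Or.inr rfl)
      · rw [hkx1, hτx1, key3]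
        simp only [Set.mem_insert_iff, Set.mem_singleton_iff]
        push_neg
        exact ⟨hne_x1d1, hne_x1d2⟩
    have hψgen : ∀ k, f k ≠ x1 → ψ (f k) = CDAux.addv (D.τ (f k)) 1 := by
      intro k hkx
      refine hψcompute k 1 one_pos (by omega) (by intro s h1 h2; omega) ?_
      simp only [Set.mem_insert_iff, Set.mem_singleton_iff]
      rintro (hh | hh)
      · rw [hd1] at hh
        have h3 := haddinj _ _ hh
        exact hkx (by rw [hx1def, ← h3, D.invol])
      · rw [← hc] at hh
        have h3 := haddinj _ _ hh
        have h4 : f k = a := by rw [hadef, ← h3, D.invol]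
        exact (hnotin k).2 (h4.trans hsp)
    -- identity : D.boundary = ψ * swap x1 d1
    have hφ : D.boundary = ψ * Equiv.swap x1 d1 := by
      apply Equiv.ext
      intro x
      rw [Equiv.Perm.mul_apply, hbD]
      by_cases hx1x : x = x1
      · rw [hx1x, Equiv.swap_apply_left, hψd1, hτx1, ← hd1]
      · by_cases hxd1 : x = d1
        · rw [hxd1, Equiv.swap_apply_right, hψx1, ← hd2def, hx1]
        · rw [Equiv.swap_apply_of_ne_of_ne hx1x hxd1]
          by_cases hxd2 : x = d2
          · rw [hxd2, hψd2, hτd2, hd2ad]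
          · obtain ⟨k, hk⟩ := hmem x hxd1 hxd2
            rw [← hk, hψgen k (by rw [hk]; exact hx1x)]
    have hcount : Nat.card (CDAux.QOrb D.boundary) + 1 =
        Nat.card (CDAux.QOrb ψ) := by
      rw [hφ]
      exact CDAux.merge_count ψ x1 d1 hψd1 hne_x1d1
    have hψcount : Nat.card (CDAux.QOrb ψ) = Nat.card (CDAux.QOrb D'.boundary) + 2 := by
      rw [← CDAux.conj_count Sgp ψ E (fun z => (hψap z).symm)]
      rw [hSgdef, CDAux.sum_count, CDAux.one_count]
      simp [Nat.card_sum]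
    have e1 : D.F = Nat.card (CDAux.QOrb D.boundary) := by
      unfold ChordDiagram.F
      rw [if_neg (by omega : ¬(n + 2 = 0))]
    have e2 : D'.F = Nat.card (CDAux.QOrb D'.boundary) := by
      unfold ChordDiagram.F
      rw [if_neg (by omega : ¬(n + 1 = 0))]
    have hff : D'.F + 1 = D.F := by
      rw [e1, e2]
      omega
    refine ⟨hff, by omega, by omega⟩
  · -- GENERIC CASE
    have hne_ad2 : a ≠ d2 := hsp
    obtain ⟨ka, hka⟩ := hmem a hne_ad1 hne_ad2
    have hne_add1d2 : CDAux.addv d1 1 ≠ d2 := by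
      intro hh
      rw [← hc] at hh
      have h3 := haddinj _ _ hh
      exact hsp (by rw [hadef, ← h3, ← hd2def])
    have keyc2 : CDAux.addv c 2 = x1 := by
      rw [CDAux.addv_two, hc, hx1]
    have hψa : ψ a = x1 := by
      have := hψcompute ka 2 (by omega) (by omega) ?_ ?_
      · rw [hka, hτa, keyc2] at this
        exact this
      · intro s hs1 hs2
        interval_cases s
        rw [hka, hτa, hc]
        exact Set.mem_insert_iff.mpr (Or.inr rfl)
      · rw [hka, hτa, keyc2]
        simp only [Set.mem_insert_iff, Set.mem_singleton_iff]
        push_neg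
        exact ⟨hne_x1d1, hne_x1d2⟩
    have keyi2 : CDAux.addv i 2 = CDAux.addv d1 1 := by
      rw [CDAux.addv_two, ← hd1]
    have hψx1 : ψ x1 = CDAux.addv d1 1 := by
      have := hψcompute kx1 2 (by omega) (by omega) ?_ ?_
      · rw [hkx1, hτx1, keyi2] at this
        exact this
      · intro s hs1 hs2
        interval_cases s
        rw [hkx1, hτx1, ← hd1]
        exact Set.mem_insert _ _
      · rw [hkx1, hτx1, keyi2]
        simp only [Set.mem_insert_iff, Set.mem_singleton_iff]
        push_neg
        refine ⟨?_, hne_add1d2⟩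
        intro hh
        exact haddne d1 hh
    have hψgen : ∀ k, f k ≠ x1 → f k ≠ a → ψ (f k) = CDAux.addv (D.τ (f k)) 1 := by
      intro k hkx hia
      refine hψcompute k 1 one_pos (by omega) (by intro s h1 h2; omega) ?_
      simp only [Set.mem_insert_iff, Set.mem_singleton_iff]
      rintro (hh | hh)
      · rw [hd1] at hh
        have h3 := haddinj _ _ hh
        exact hkx (by rw [hx1def, ← h3, D.invol])
      · rw [← hc] at hh
        have h3 := haddinj _ _ hh
        exact hia (by rw [hadef, ← h3, D.invol])
    -- identity
    set σ1 := ψ * Equiv.swap x1 d2 with hσ1def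
    set σ2 := σ1 * Equiv.swap x1 a with hσ2def
    have hφ : D.boundary = σ2 * Equiv.swap x1 d1 := by
      apply Equiv.ext
      intro x
      rw [hσ2def, hσ1def, Equiv.Perm.mul_apply, Equiv.Perm.mul_apply,
        Equiv.Perm.mul_apply, hbD]
      by_cases hx1x : x = x1
      · rw [hx1x, Equiv.swap_apply_left,
          Equiv.swap_apply_of_ne_of_ne (Ne.symm hne_x1d1) (Ne.symm hne_ad1),
          Equiv.swap_apply_of_ne_of_ne (Ne.symm hne_x1d1) hne_d1d2,
          hψd1, hτx1, ← hd1]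
      · by_cases hxd1 : x = d1
        · rw [hxd1, Equiv.swap_apply_right, Equiv.swap_apply_left,
            Equiv.swap_apply_of_ne_of_ne hne_ax1 hne_ad2, hψa, ← hd2def, hx1]
        · by_cases hxa : x = a
          · rw [hxa, Equiv.swap_apply_of_ne_of_ne hne_ax1 hne_ad1,
              Equiv.swap_apply_right, Equiv.swap_apply_left, hψd2, hτa, hc]
          · by_cases hxd2 : x = d2
            · rw [hxd2,
                Equiv.swap_apply_of_ne_of_ne (Ne.symm hne_x1d2) (Ne.symm hne_d1d2),
                Equiv.swap_apply_of_ne_of_ne (Ne.symm hne_x1d2) (Ne.symm hne_ad2),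
                Equiv.swap_apply_right, hψx1, hτd2]
            · obtain ⟨k, hk⟩ := hmem x hxd1 hxd2
              rw [Equiv.swap_apply_of_ne_of_ne hx1x hxd1,
                Equiv.swap_apply_of_ne_of_ne hx1x hxa,
                Equiv.swap_apply_of_ne_of_ne hx1x hxd2, ← hk,
                hψgen k (by rw [hk]; exact hx1x) (by rw [hk]; exact hxa)]
    have hσ2x1 : σ2 x1 = x1 := by
      rw [hσ2def, hσ1def, Equiv.Perm.mul_apply, Equiv.Perm.mul_apply,
        Equiv.swap_apply_left, Equiv.swap_apply_of_ne_of_ne hne_ax1 hne_ad2, hψa]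
    have step1 : Nat.card (CDAux.QOrb σ1) + 1 = Nat.card (CDAux.QOrb ψ) := by
      rw [hσ1def]
      exact CDAux.merge_count ψ x1 d2 hψd2 hne_x1d2
    have hσ2σ1 : σ2 * Equiv.swap a x1 = σ1 := by
      rw [hσ2def, Equiv.swap_comm a x1, mul_assoc, Equiv.swap_mul_self, mul_one]
    have step2 : Nat.card (CDAux.QOrb σ1) + 1 = Nat.card (CDAux.QOrb σ2) := by
      have := CDAux.merge_count σ2 a x1 hσ2x1 hne_ax1
      rw [hσ2σ1] at this
      exact this
    have step3 : Nat.card (CDAux.QOrb D.boundary) + 1 = Nat.card (CDAux.QOrb σ2) := by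
      have := CDAux.merge_count σ2 d1 x1 hσ2x1 (Ne.symm hne_x1d1)
      rw [show σ2 * Equiv.swap d1 x1 = σ2 * Equiv.swap x1 d1 by rw [Equiv.swap_comm],
        ← hφ] at this
      exact this
    have hψcount : Nat.card (CDAux.QOrb ψ) = Nat.card (CDAux.QOrb D'.boundary) + 2 := by
      rw [← CDAux.conj_count Sgp ψ E (fun z => (hψap z).symm)]
      rw [hSgdef, CDAux.sum_count, CDAux.one_count]
      simp [Nat.card_sum]
    have e1 : D.F = Nat.card (CDAux.QOrb D.boundary) := by
      unfold ChordDiagram.F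
      rw [if_neg (by omega : ¬(n + 2 = 0))]
    have e2 : D'.F = Nat.card (CDAux.QOrb D'.boundary) := by
      unfold ChordDiagram.F
      rw [if_neg (by omega : ¬(n + 1 = 0))]
    have hff : D'.F + 1 = D.F := by
      rw [e1, e2]
      omega
    refine ⟨hff, by omega, by omega⟩
end
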